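/- Let X and Y be forests over an alphabet 𝒳 and c a cost function over 𝒳 that is non-negative, self-equal, and conforms to the triangular inequality. Then the minimum cost of an edit script transforming X into Y equals the minimum cost of a tree mapping between X and Y: min { c(δ̄, X) : δ̄ an edit script with δ̄(X) = Y } = min { c(M, X, Y) : M a tree mapping between X and Y }. -/

import Mathlib

namespace TED

/-- A tree over an alphabet `α`: a label together with a (possibly empty) list of children. -/
inductive PTree (α : Type) where
  | node : α → List (PTree α) → PTree α

/-- A forest over `α` is a finite list of trees; `[]` is the empty forest `ε`. -/
abbrev Forest (α : Type) := List (PTree α)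

namespace PTree

/-- The label of (the root of) a tree. -/
def label {α : Type} : PTree α → α
  | node a _ => a

/-- The children of (the root of) a tree. -/
def children {α : Type} : PTree α → List (PTree α)
  | node _ cs => cs

mutual
  /-- The number of nodes of a tree. -/
  def size {α : Type} : PTree α → ℕ
    | node _ cs => 1 + sizeL cs
  /-- The number of nodes of a forest. -/
  def sizeL {α : Type} : List (PTree α) → ℕ
    | [] => 0
    | t :: ts => size t + sizeL ts
end

mutual
  /-- The pre-order list of all subtrees of a tree. -/
  def subtreesT {α : Type} : PTree α → List (PTree α)
    | node a cs => node a cs :: subtreesL cs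
  /-- The pre-order list of all subtrees of a forest. -/
  def subtreesL {α : Type} : List (PTree α) → List (PTree α)
    | [] => []
    | t :: ts => subtreesT t ++ subtreesL ts
end

end PTree

open PTree

/-- The pre-order `π(X)` of a forest: the list of all its subtrees. -/
def preorder {α : Type} (F : Forest α) : List (PTree α) := PTree.subtreesL F

/-- The size `|X|` of a forest: the length of its pre-order. -/
def fsize {α : Type} (F : Forest α) : ℕ := (preorder F).length

/-- The `i`-th subtree `x̄_i` (1-indexed pre-order) of a forest, if it exists. -/
def treeAt {α : Type} (F : Forest α) (i : ℕ) : Option (PTree α) := (preorder F)[i - 1]?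

/-- The label `x_i` of the `i`-th subtree, as an element of `𝒳 ∪ {−}`
(`none` plays the role of the gap symbol `−`). -/
def labelAt {α : Type} (F : Forest α) (i : ℕ) : Option α := (treeAt F i).map PTree.label

/-- The number of nodes of the `i`-th subtree `x̄_i`. -/
def sizeAt {α : Type} (F : Forest α) (i : ℕ) : ℕ := ((treeAt F i).map PTree.size).getD 0

/-- A cost function over `α`: a real-valued function on `(𝒳 ∪ {−}) × (𝒳 ∪ {−})`,
where the gap symbol `−` is modelled by `none`. -/
abbrev Cost (α : Type) := Option α → Option α → ℝ

/-- `c` is non-negative. -/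
def Nonneg {α : Type} (c : Cost α) : Prop := ∀ x y, 0 ≤ c x y
/-- `c` is self-equal. -/
def SelfEq {α : Type} (c : Cost α) : Prop := ∀ x, c x x = 0
/-- `c` is discernible. -/
def Discernible {α : Type} (c : Cost α) : Prop := ∀ x y, x ≠ y → 0 < c x y
/-- `c` is symmetric. -/
def Symm {α : Type} (c : Cost α) : Prop := ∀ x y, c x y = c y x
/-- `c` conforms to the triangular inequality. -/
def Triangle {α : Type} (c : Cost α) : Prop := ∀ x y z, c x z ≤ c x y + c y z

/-- Deletion of the first root: its children are spliced into its place. -/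
def delRoot {α : Type} : Forest α → Forest α
  | [] => []
  | PTree.node _ cs :: ts => cs ++ ts

/-- Replacement of the label of the first root by `y`. -/
def repRoot {α : Type} (y : α) : Forest α → Forest α
  | [] => []
  | PTree.node _ cs :: ts => PTree.node y cs :: ts

/-- Insertion of a new root labeled `y` at root level, adopting the trees
`l` to `r-1` of the forest as its children. -/
def insRoot {α : Type} (y : α) (l r : ℕ) (F : Forest α) : Forest α :=
  if r > F.length + 1 ∨ l > r ∨ l < 1 then F
  else if l = r then F.take (l - 1) ++ [PTree.node y []] ++ F.drop (l - 1)
  else F.take (l - 1) ++ [PTree.node y ((F.drop (l - 1)).take (r - l))] ++ F.drop (r - 1)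

/-- `del_i`: deletion of the node with pre-order index `i`. -/
def applyDel {α : Type} : ℕ → Forest α → Forest α
  | _, [] => []
  | i, PTree.node a cs :: ts =>
    if i < 1 then PTree.node a cs :: ts
    else if i = 1 then delRoot (PTree.node a cs :: ts)
    else if i ≤ size (PTree.node a cs) then PTree.node a (applyDel (i - 1) cs) :: ts
    else PTree.node a cs :: applyDel (i - size (PTree.node a cs)) ts
  termination_by _ F => sizeOf F

/-- `rep_{i,y}`: replacement of the label of the node with pre-order index `i` by `y`. -/
def applyRep {α : Type} (y : α) : ℕ → Forest α → Forest α
  | _, [] => []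
  | i, PTree.node a cs :: ts =>
    if i < 1 then PTree.node a cs :: ts
    else if i = 1 then repRoot y (PTree.node a cs :: ts)
    else if i ≤ size (PTree.node a cs) then PTree.node a (applyRep y (i - 1) cs) :: ts
    else PTree.node a cs :: applyRep y (i - size (PTree.node a cs)) ts
  termination_by _ F => sizeOf F

/-- `ins_{i,y,l,r}`: insertion of a node labeled `y` as a child of the node with
pre-order index `i` (at root level if `i = 0`), adopting that node's children
`l` through `r-1` as its children. -/
def applyIns {α : Type} (y : α) (l r : ℕ) : ℕ → Forest α → Forest α
  | 0, F => insRoot y l r F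
  | _ + 1, [] => []
  | i + 1, PTree.node a cs :: ts =>
    if i + 1 ≤ size (PTree.node a cs) then PTree.node a (applyIns y l r i cs) :: ts
    else PTree.node a cs :: applyIns y l r (i + 1 - size (PTree.node a cs)) ts
  termination_by _ F => sizeOf F

/-- The standard edits: deletions `del_i`, replacements `rep_{i,y}` and
insertions `ins_{i,y,l,r}`. -/
inductive Edit (α : Type) where
  | del (i : ℕ)
  | rep (i : ℕ) (y : α)
  | ins (i : ℕ) (y : α) (l r : ℕ)

/-- Application of a single edit to a forest. -/
def Edit.apply {α : Type} : Edit α → Forest α → Forest α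
  | .del i, F => applyDel i F
  | .rep i y, F => applyRep y i F
  | .ins i y l r, F => applyIns y l r i F

/-- Application of an edit script `δ̄ = δ₁,…,δ_T` to a forest (left to right). -/
def applyScript {α : Type} (δ : List (Edit α)) (F : Forest α) : Forest α :=
  δ.foldl (fun F e => e.apply F) F

open Classical in
/-- The cost of a single edit with respect to the forest it is applied to:
`0` if the edit leaves the forest unchanged, and otherwise `c(x_i, y)` for a
replacement, `c(x_i, −)` for a deletion and `c(−, y)` for an insertion. -/
noncomputable def editCost {α : Type} (c : Cost α) (e : Edit α) (F : Forest α) : ℝ :=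
  if e.apply F = F then 0
  else
    match e with
    | .del i => c (labelAt F i) none
    | .rep i y => c (labelAt F i) (some y)
    | .ins _ y _ _ => c none (some y)

/-- The cost `c(δ̄, X)` of an edit script: the sum of the costs of its edits,
each evaluated on the forest to which it is applied. -/
noncomputable def scriptCost {α : Type} (c : Cost α) : List (Edit α) → Forest α → ℝ
  | [], _ => 0
  | e :: es, F => editCost c e F + scriptCost c es (e.apply F)

/-- `x̄_k` is a (proper) ancestor of `x̄_i`, expressed via 1-indexed pre-order indices:
the descendants of `x̄_k` occupy exactly the pre-order indices `k+1, …, k + |x̄_k| - 1`. -/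
def AncestorIdx {α : Type} (F : Forest α) (k i : ℕ) : Prop :=
  k < i ∧ i < k + sizeAt F k

/-- A tree mapping between two forests: a set `M ⊆ {1,…,|F|} × {1,…,|G|}` such that
for all `(i,j), (i',j') ∈ M` we have `i = i' ↔ j = j'`, `i ≤ i' ↔ j ≤ j'`, and
`x̄_i` is an ancestor of `x̄_{i'}` iff `ȳ_j` is an ancestor of `ȳ_{j'}`. -/
def IsTreeMapping {α : Type} (F G : Forest α) (M : Finset (ℕ × ℕ)) : Prop :=
  (∀ p ∈ M, 1 ≤ p.1 ∧ p.1 ≤ fsize F ∧ 1 ≤ p.2 ∧ p.2 ≤ fsize G) ∧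
  (∀ p ∈ M, ∀ q ∈ M,
    (p.1 = q.1 ↔ p.2 = q.2) ∧
    (p.1 ≤ q.1 ↔ p.2 ≤ q.2) ∧
    (AncestorIdx F p.1 q.1 ↔ AncestorIdx G p.2 q.2))

/-- The cost `c(M, X, Y)` of a tree mapping: the sum of the replacement costs of
the mapped pairs, the deletion costs of the unmapped nodes of `X`, and the
insertion costs of the unmapped nodes of `Y`. -/
noncomputable def mapCost {α : Type} (c : Cost α) (F G : Forest α) (M : Finset (ℕ × ℕ)) : ℝ :=
  (∑ p ∈ M, c (labelAt F p.1) (labelAt G p.2))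
  + (∑ i ∈ (Finset.Icc 1 (fsize F)).filter (fun i => ∀ p ∈ M, p.1 ≠ i), c (labelAt F i) none)
  + (∑ j ∈ (Finset.Icc 1 (fsize G)).filter (fun j => ∀ p ∈ M, p.2 ≠ j), c none (labelAt G j))

/-- A co-optimal tree mapping: a tree mapping of minimum cost. -/
def IsCoOptimal {α : Type} (c : Cost α) (F G : Forest α) (M : Finset (ℕ × ℕ)) : Prop :=
  IsTreeMapping F G M ∧
  ∀ M' : Finset (ℕ × ℕ), IsTreeMapping F G M' → mapCost c F G M ≤ mapCost c F G M'

section Aux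
variable {α : Type}

mutual
theorem length_subtreesT (t : PTree α) : (subtreesT t).length = size t := by
  cases t with
  | node a cs =>
    simp [subtreesT, size, length_subtreesL cs]; omega
theorem length_subtreesL (F : List (PTree α)) : (subtreesL F).length = sizeL F := by
  cases F with
  | nil => simp [subtreesL, sizeL]
  | cons t ts => simp [subtreesL, sizeL, length_subtreesT t, length_subtreesL ts]
end

theorem fsize_eq_sizeL (F : Forest α) : fsize F = sizeL F := length_subtreesL F

theorem preorder_cons (a : α) (cs ts : Forest α) :
    preorder (PTree.node a cs :: ts) = PTree.node a cs :: (preorder cs ++ preorder ts) := by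
  simp [preorder, subtreesL, subtreesT]

theorem subtreesL_append (A B : Forest α) :
    subtreesL (A ++ B) = subtreesL A ++ subtreesL B := by
  induction A with
  | nil => simp [subtreesL]
  | cons t ts ih => simp [subtreesL, ih, List.append_assoc]

theorem preorder_append (A B : Forest α) :
    preorder (A ++ B) = preorder A ++ preorder B := subtreesL_append A B

theorem fsize_nil : fsize ([] : Forest α) = 0 := rfl

theorem fsize_cons (a : α) (cs ts : Forest α) :
    fsize (PTree.node a cs :: ts) = 1 + fsize cs + fsize ts := by
  simp [fsize, preorder_cons]; omega

theorem fsize_append (A B : Forest α) : fsize (A ++ B) = fsize A + fsize B := by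
  simp [fsize, preorder_append]

theorem size_eq (a : α) (cs : Forest α) : size (PTree.node a cs) = 1 + fsize cs := by
  simp [size, fsize_eq_sizeL]

theorem treeAt_none_iff {F : Forest α} {j : ℕ} (h1 : 1 ≤ j) :
    treeAt F j = none ↔ fsize F < j := by
  simp [treeAt, List.getElem?_eq_none_iff, fsize]; omega

theorem treeAt_isSome {F : Forest α} {j : ℕ} (h1 : 1 ≤ j) (h2 : j ≤ fsize F) :
    ∃ t, treeAt F j = some t := by
  rcases ht : treeAt F j with _ | t
  · rw [treeAt_none_iff h1] at ht; omega
  · exact ⟨t, rfl⟩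

theorem treeAt_cons_one (a : α) (cs ts : Forest α) :
    treeAt (PTree.node a cs :: ts) 1 = some (PTree.node a cs) := by
  simp [treeAt, preorder_cons]

theorem treeAt_cons_mid {j : ℕ} (a : α) (cs ts : Forest α) (h2 : 2 ≤ j) (h3 : j ≤ 1 + fsize cs) :
    treeAt (PTree.node a cs :: ts) j = treeAt cs (j - 1) := by
  simp only [treeAt, preorder_cons]
  have e1 : (PTree.node a cs :: (preorder cs ++ preorder ts))[j-1]? = (preorder cs ++ preorder ts)[j-2]? := by
    rw [show j - 1 = (j-2) + 1 by omega, List.getElem?_cons_succ]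
  rw [e1, List.getElem?_append_left (by show j - 2 < (preorder cs).length; rw [show (preorder cs).length = fsize cs from rfl]; omega)]
  congr 1 <;> omega

theorem treeAt_cons_high {j : ℕ} (a : α) (cs ts : Forest α) (h : 1 + fsize cs < j) :
    treeAt (PTree.node a cs :: ts) j = treeAt ts (j - (1 + fsize cs)) := by
  simp only [treeAt, preorder_cons]
  have e1 : (PTree.node a cs :: (preorder cs ++ preorder ts))[j-1]? = (preorder cs ++ preorder ts)[j-2]? := by
    rw [show j - 1 = (j-2) + 1 by omega, List.getElem?_cons_succ]
  have hl : (preorder cs).length = fsize cs := rfl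
  rw [e1, List.getElem?_append_right (by rw [hl]; omega)]
  rw [hl]; congr 1; omega

theorem treeAt_append {j : ℕ} (A B : Forest α) (h1 : 1 ≤ j) :
    treeAt (A ++ B) j = if j ≤ fsize A then treeAt A j else treeAt B (j - fsize A) := by
  simp only [treeAt, preorder_append]
  have hl : (preorder A).length = fsize A := rfl
  split
  · rw [List.getElem?_append_left (by rw [hl]; omega)]
  · rw [List.getElem?_append_right (by rw [hl]; omega)]
    rw [hl]; congr 1; omega

end Aux
section Aux2
variable {α : Type}

/-- profile of the `j`-th subtree: label and size. -/
def nprof (F : Forest α) (j : ℕ) : Option (α × ℕ) :=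
  (treeAt F j).map (fun t => (t.label, t.size))

theorem labelAt_eq_nprof (F : Forest α) (j : ℕ) :
    labelAt F j = (nprof F j).map Prod.fst := by
  simp [labelAt, nprof, Option.map_map]; rfl

theorem sizeAt_eq_nprof (F : Forest α) (j : ℕ) :
    sizeAt F j = ((nprof F j).map Prod.snd).getD 0 := by
  simp [sizeAt, nprof, Option.map_map]; rfl

theorem nprof_none_iff {F : Forest α} {j : ℕ} (h1 : 1 ≤ j) :
    nprof F j = none ↔ fsize F < j := by
  simp [nprof]; exact treeAt_none_iff h1

theorem nprof_cons_one (a : α) (cs ts : Forest α) :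
    nprof (PTree.node a cs :: ts) 1 = some (a, 1 + fsize cs) := by
  simp [nprof, treeAt_cons_one, PTree.label, size_eq]

theorem nprof_cons_mid {j : ℕ} (a : α) (cs ts : Forest α) (h2 : 2 ≤ j) (h3 : j ≤ 1 + fsize cs) :
    nprof (PTree.node a cs :: ts) j = nprof cs (j - 1) := by
  simp [nprof, treeAt_cons_mid a cs ts h2 h3]

theorem nprof_cons_high {j : ℕ} (a : α) (cs ts : Forest α) (h : 1 + fsize cs < j) :
    nprof (PTree.node a cs :: ts) j = nprof ts (j - (1 + fsize cs)) := by
  simp [nprof, treeAt_cons_high a cs ts h]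

theorem nprof_append {j : ℕ} (A B : Forest α) (h1 : 1 ≤ j) :
    nprof (A ++ B) j = if j ≤ fsize A then nprof A j else nprof B (j - fsize A) := by
  simp only [nprof, treeAt_append A B h1]; split <;> rfl

theorem sizeAt_pos {F : Forest α} {j : ℕ} (h1 : 1 ≤ j) (h2 : j ≤ fsize F) :
    1 ≤ sizeAt F j := by
  obtain ⟨t, ht⟩ := treeAt_isSome h1 h2
  cases t with
  | node a cs => simp [sizeAt, ht, size] <;> omega

theorem descBound (F : Forest α) (j : ℕ) (h1 : 1 ≤ j) (h2 : j ≤ fsize F) :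
    j + sizeAt F j ≤ fsize F + 1 := by
  match F with
  | [] => rw [fsize_nil] at h2; omega
  | PTree.node a cs :: ts =>
    rw [fsize_cons] at h2 ⊢
    rcases Nat.lt_or_ge j 2 with hj | hj
    · have hj1 : j = 1 := by omega
      subst hj1
      simp [sizeAt, treeAt_cons_one, size_eq] <;> omega
    · rcases le_or_gt j (1 + fsize cs) with hj2 | hj2
      · have : sizeAt (PTree.node a cs :: ts) j = sizeAt cs (j - 1) := by
          simp [sizeAt, treeAt_cons_mid a cs ts hj hj2]
        rw [this]
        have := descBound cs (j - 1) (by omega) (by omega)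
        omega
      · have : sizeAt (PTree.node a cs :: ts) j = sizeAt ts (j - (1 + fsize cs)) := by
          simp [sizeAt, treeAt_cons_high a cs ts hj2]
        rw [this]
        have := descBound ts (j - (1 + fsize cs)) (by omega) (by omega)
        omega
  termination_by sizeOf F

theorem applyDel_out (i : ℕ) (F : Forest α) (h : i < 1 ∨ fsize F < i) : applyDel i F = F := by
  match F with
  | [] => rw [applyDel]
  | PTree.node a cs :: ts =>
    rw [applyDel]
    rcases h with h | h
    · rw [if_pos h]
    · rw [fsize_cons] at h
      have h1 : ¬ i < 1 := by omega
      have h2 : ¬ i = 1 := by omega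
      have h3 : ¬ i ≤ size (PTree.node a cs) := by rw [size_eq]; omega
      rw [if_neg h1, if_neg h2, if_neg h3,
        applyDel_out (i - size (PTree.node a cs)) ts (by rw [size_eq]; omega)]
  termination_by sizeOf F

theorem fsize_applyDel (i : ℕ) (F : Forest α) (h1 : 1 ≤ i) (h2 : i ≤ fsize F) :
    fsize (applyDel i F) + 1 = fsize F := by
  match F with
  | [] => rw [fsize_nil] at h2; omega
  | PTree.node a cs :: ts =>
    rw [fsize_cons] at h2 ⊢
    rw [applyDel, if_neg (by omega)]
    rcases Nat.eq_or_lt_of_le h1 with h | h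
    · rw [if_pos h.symm]
      simp [delRoot, fsize_append, fsize_cons]
      omega
    · rw [if_neg (by omega)]
      rcases le_or_gt i (size (PTree.node a cs)) with hle | hlt
      · rw [if_pos hle, fsize_cons]
        rw [size_eq] at hle
        have := fsize_applyDel (i - 1) cs (by omega) (by omega)
        omega
      · rw [if_neg (by omega), fsize_cons, size_eq]
        rw [size_eq] at hlt
        have := fsize_applyDel (i - (1 + fsize cs)) ts (by omega) (by omega)
        omega
  termination_by sizeOf F

theorem nprof_applyDel (i : ℕ) (F : Forest α) (h1 : 1 ≤ i) (h2 : i ≤ fsize F)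
    (j : ℕ) (hj : 1 ≤ j) :
    nprof (applyDel i F) j =
      (nprof F (if j < i then j else j + 1)).map
        (fun p => (p.1, if j < i ∧ i < j + p.2 then p.2 - 1 else p.2)) := by
  match F with
  | [] => rw [fsize_nil] at h2; omega
  | PTree.node a cs :: ts =>
    have hfs : fsize (PTree.node a cs :: ts) = 1 + fsize cs + fsize ts := fsize_cons a cs ts
    rw [applyDel, if_neg (by omega)]
    rcases Nat.eq_or_lt_of_le h1 with h | hgt
    · -- i = 1
      rw [if_pos h.symm]
      have hd : delRoot (PTree.node a cs :: ts) = cs ++ ts := rfl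
      rw [hd, if_neg (by omega)]
      rw [nprof_append cs ts hj]
      rcases le_or_gt j (fsize cs) with hle | hlt
      · rw [if_pos hle, nprof_cons_mid a cs ts (by omega) (by omega)]
        have : j + 1 - 1 = j := by omega
        rw [this]
        rcases hp : nprof cs j with _ | p
        · rfl
        · simp only [Option.map_some]
          rw [if_neg (by omega)]
      · rw [if_neg (by omega), nprof_cons_high a cs ts (by omega)]
        have : j + 1 - (1 + fsize cs) = j - fsize cs := by omega
        rw [this]
        rcases hp : nprof ts (j - fsize cs) with _ | p
        · rfl
        · simp only [Option.map_some]
          rw [if_neg (by omega)]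
    · rw [if_neg (by omega)]
      rcases le_or_gt i (size (PTree.node a cs)) with hle | hlt
      · -- 2 ≤ i ≤ size t : recurse into cs
        rw [if_pos hle]
        rw [size_eq] at hle
        have hcs1 : fsize (applyDel (i - 1) cs) + 1 = fsize cs :=
          fsize_applyDel (i - 1) cs (by omega) (by omega)
        rcases Nat.lt_or_ge j 2 with hj2 | hj2
        · -- j = 1
          have hj1 : j = 1 := by omega
          subst hj1
          rw [nprof_cons_one, if_pos (by omega), nprof_cons_one]
          simp only [Option.map_some]
          rw [if_pos (show 1 < i ∧ i < 1 + (1 + fsize cs) by omega)]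
          rw [show 1 + fsize cs - 1 = 1 + fsize (applyDel (i - 1) cs) from by omega]
        · rcases le_or_gt j (fsize cs) with hjm | hjh
          · -- middle: j within new head
            rw [nprof_cons_mid a _ ts hj2 (by omega)]
            rw [nprof_applyDel (i - 1) cs (by omega) (by omega) (j - 1) (by omega)]
            rcases Nat.lt_or_ge j i with hji | hji
            · rw [if_pos (by omega), if_pos hji, nprof_cons_mid a cs ts hj2 (by omega)]
              rcases hp : nprof cs (j - 1) with _ | p
              · rfl
              · simp only [Option.map_some]
                have he : (if j - 1 < i - 1 ∧ i - 1 < j - 1 + p.2 then p.2 - 1 else p.2)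
                    = (if j < i ∧ i < j + p.2 then p.2 - 1 else p.2) := by
                  split_ifs <;> omega
                rw [he]
            · rw [if_neg (by omega), if_neg (by omega), show j - 1 + 1 = j from by omega,
                nprof_cons_mid a cs ts (by omega) (by omega), show j + 1 - 1 = j from by omega]
              rcases hp : nprof cs j with _ | p
              · rfl
              · simp only [Option.map_some]
                rw [if_neg (by omega), if_neg (by omega)]
          · -- high: j beyond new head
            rw [nprof_cons_high a _ ts (by omega)]
            rw [if_neg (by omega), nprof_cons_high a cs ts (by omega)]
            have e1 : j - (1 + fsize (applyDel (i - 1) cs)) = j + 1 - (1 + fsize cs) := by omega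
            rw [e1]
            rcases hp : nprof ts (j + 1 - (1 + fsize cs)) with _ | p
            · rfl
            · simp only [Option.map_some]
              rw [if_neg (by omega)]
      · -- i beyond head : recurse into ts
        rw [if_neg (by omega)]
        rw [size_eq] at hlt ⊢
        rcases Nat.lt_or_ge j 2 with hj2 | hj2
        · have hj1 : j = 1 := by omega
          subst hj1
          rw [nprof_cons_one, if_pos (by omega), nprof_cons_one]
          simp only [Option.map_some]
          rw [if_neg (by omega)]
        · rcases le_or_gt j (1 + fsize cs) with hjm | hjh
          · -- j within untouched head
            rw [nprof_cons_mid a cs (applyDel (i - (1 + fsize cs)) ts) hj2 hjm,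
              if_pos (by omega), nprof_cons_mid a cs ts hj2 hjm]
            rcases hp : nprof cs (j - 1) with _ | p
            · rfl
            · simp only [Option.map_some]
              have hrange : ¬ (fsize cs < j - 1) := by
                intro hcon
                rw [← nprof_none_iff (show 1 ≤ j - 1 by omega)] at hcon
                rw [hp] at hcon
                exact Option.some_ne_none p hcon
              have hdesc : (j - 1) + sizeAt cs (j - 1) ≤ fsize cs + 1 :=
                descBound cs (j - 1) (by omega) (by omega)
              have hsz : sizeAt cs (j - 1) = p.2 := by
                rw [sizeAt_eq_nprof, hp]; rfl
              rw [if_neg (by omega)]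
          · -- j beyond untouched head : recurse into ts
            rw [nprof_cons_high a cs (applyDel (i - (1 + fsize cs)) ts) hjh]
            rw [nprof_applyDel (i - (1 + fsize cs)) ts (by omega) (by omega)
              (j - (1 + fsize cs)) (by omega)]
            rcases Nat.lt_or_ge j i with hji | hji
            · rw [if_pos (by omega), if_pos (by omega), nprof_cons_high a cs ts hjh]
              rcases hp : nprof ts (j - (1 + fsize cs)) with _ | p
              · rfl
              · simp only [Option.map_some]
                have he : (if j - (1 + fsize cs) < i - (1 + fsize cs) ∧
                      i - (1 + fsize cs) < j - (1 + fsize cs) + p.2 then p.2 - 1 else p.2)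
                    = (if j < i ∧ i < j + p.2 then p.2 - 1 else p.2) := by
                  split_ifs <;> omega
                rw [he]
            · rw [if_neg (by omega), if_neg (by omega),
                show j - (1 + fsize cs) + 1 = j + 1 - (1 + fsize cs) from by omega,
                nprof_cons_high a cs ts (by omega)]
              rcases hp : nprof ts (j + 1 - (1 + fsize cs)) with _ | p
              · rfl
              · simp only [Option.map_some]
                have he : (if j - (1 + fsize cs) < i - (1 + fsize cs) ∧
                      i - (1 + fsize cs) < j - (1 + fsize cs) + p.2 then p.2 - 1 else p.2)
                    = (if j < i ∧ i < j + p.2 then p.2 - 1 else p.2) := by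
                  split_ifs <;> omega
                rw [he]
  termination_by sizeOf F

end Aux2
section Aux3
variable {α : Type}

theorem labelAt_applyDel {i : ℕ} {F : Forest α} (h1 : 1 ≤ i) (h2 : i ≤ fsize F)
    {j : ℕ} (hj : 1 ≤ j) :
    labelAt (applyDel i F) j = labelAt F (if j < i then j else j + 1) := by
  rw [labelAt_eq_nprof, labelAt_eq_nprof, nprof_applyDel i F h1 h2 j hj]
  rcases nprof F (if j < i then j else j + 1) with _ | p <;> rfl

theorem anc_applyDel {F : Forest α} {i : ℕ} (h1 : 1 ≤ i) (h2 : i ≤ fsize F)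
    {k j : ℕ} (hk : 1 ≤ k) :
    AncestorIdx (applyDel i F) k j ↔
      AncestorIdx F (if k < i then k else k + 1) (if j < i then j else j + 1) := by
  simp only [AncestorIdx, sizeAt_eq_nprof]
  rw [nprof_applyDel i F h1 h2 k hk]
  rcases hp : nprof F (if k < i then k else k + 1) with _ | p <;>
    simp only [Option.map_some, Option.map_none, Option.getD_none, Option.getD_some] <;>
    split_ifs <;> omega

theorem fsize_applyRep (y : α) (i : ℕ) (F : Forest α) :
    fsize (applyRep y i F) = fsize F := by
  match F with
  | [] => rw [applyRep]
  | PTree.node a cs :: ts =>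
    rw [applyRep]
    split
    · rfl
    · split
      · simp [repRoot, fsize_cons]
      · split
        · rw [fsize_cons, fsize_cons, fsize_applyRep y (i - 1) cs]
        · rw [fsize_cons, fsize_cons, fsize_applyRep y (i - size (PTree.node a cs)) ts]
  termination_by sizeOf F

theorem nprof_applyRep (y : α) (i : ℕ) (F : Forest α) (j : ℕ) (hj : 1 ≤ j) :
    nprof (applyRep y i F) j =
      if j = i then (nprof F j).map (fun p => (y, p.2)) else nprof F j := by
  match F with
  | [] =>
    have : nprof ([] : Forest α) j = none := rfl
    rw [applyRep, this]
    split <;> rfl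
  | PTree.node a cs :: ts =>
    rw [applyRep]
    rcases Nat.lt_or_ge i 1 with hi | hi
    · rw [if_pos hi, if_neg (by omega)]
    · rw [if_neg (by omega)]
      rcases Nat.eq_or_lt_of_le hi with hi1 | hi2
      · -- i = 1
        rw [if_pos hi1.symm]
        have hrr : repRoot y (PTree.node a cs :: ts) = PTree.node y cs :: ts := rfl
        rw [hrr]
        rcases Nat.lt_or_ge j 2 with hj2 | hj2
        · have : j = 1 := by omega
          subst this
          rw [nprof_cons_one, nprof_cons_one, if_pos hi1.symm.symm ]
          rfl
        · rcases le_or_gt j (1 + fsize cs) with hjm | hjh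
          · rw [nprof_cons_mid y cs ts hj2 hjm, nprof_cons_mid a cs ts hj2 hjm,
              if_neg (by omega)]
          · rw [nprof_cons_high y cs ts hjh, nprof_cons_high a cs ts hjh, if_neg (by omega)]
      · rw [if_neg (by omega)]
        rcases le_or_gt i (size (PTree.node a cs)) with hle | hlt
        · rw [if_pos hle]
          rw [size_eq] at hle
          have hf : fsize (applyRep y (i - 1) cs) = fsize cs := fsize_applyRep y (i - 1) cs
          rcases Nat.lt_or_ge j 2 with hj2 | hj2
          · have : j = 1 := by omega
            subst this
            rw [nprof_cons_one, nprof_cons_one, hf, if_neg (by omega)]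
          · rcases le_or_gt j (1 + fsize cs) with hjm | hjh
            · rw [nprof_cons_mid a _ ts hj2 (by omega), nprof_cons_mid a cs ts hj2 hjm,
                nprof_applyRep y (i - 1) cs (j - 1) (by omega)]
              by_cases hji : j = i
              · rw [if_pos (by omega), if_pos hji]
              · rw [if_neg (by omega), if_neg hji]
            · rw [nprof_cons_high a _ ts (by omega), hf, nprof_cons_high a cs ts hjh,
                if_neg (by omega)]
        · rw [if_neg (by omega)]
          rw [size_eq] at hlt ⊢
          rcases Nat.lt_or_ge j 2 with hj2 | hj2
          · have : j = 1 := by omega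
            subst this
            rw [nprof_cons_one, nprof_cons_one, if_neg (by omega)]
          · rcases le_or_gt j (1 + fsize cs) with hjm | hjh
            · rw [nprof_cons_mid a cs _ hj2 hjm, nprof_cons_mid a cs ts hj2 hjm,
                if_neg (by omega)]
            · rw [nprof_cons_high a cs _ hjh, nprof_cons_high a cs ts hjh,
                nprof_applyRep y (i - (1 + fsize cs)) ts (j - (1 + fsize cs)) (by omega)]
              by_cases hji : j = i
              · rw [if_pos (by omega), if_pos hji]
              · rw [if_neg (by omega), if_neg hji]
  termination_by sizeOf F

theorem anc_applyRep (y : α) (i : ℕ) (F : Forest α) {k j : ℕ} (hk : 1 ≤ k) :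
    AncestorIdx (applyRep y i F) k j ↔ AncestorIdx F k j := by
  simp only [AncestorIdx, sizeAt_eq_nprof]
  rw [nprof_applyRep y i F k hk]
  rcases hp : nprof F k with _ | p <;> split_ifs <;>
    simp only [Option.map_some, Option.map_none, Option.getD_none, Option.getD_some] <;>
    omega

theorem labelAt_applyRep (y : α) (i : ℕ) (F : Forest α) {j : ℕ} (hj : 1 ≤ j) :
    labelAt (applyRep y i F) j =
      if j = i ∧ j ≤ fsize F then some y else labelAt F j := by
  rw [labelAt_eq_nprof, labelAt_eq_nprof, nprof_applyRep y i F j hj]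
  by_cases hji : j = i
  · rw [if_pos hji]
    rcases hp : nprof F j with _ | p
    · have : fsize F < j := (nprof_none_iff hj).1 hp
      rw [if_neg (by omega)]
      rfl
    · have : ¬ fsize F < j := by
        intro hcon
        rw [(nprof_none_iff hj).2 hcon] at hp
        cases hp
      rw [if_pos ⟨hji, by omega⟩]
      rfl
  · rw [if_neg hji, if_neg (by simp [hji])]

theorem forest_eq_of_nprof (F G : Forest α) (h : ∀ j, 1 ≤ j → nprof F j = nprof G j) :
    F = G := by
  match F, G with
  | [], [] => rfl
  | [], PTree.node b ds :: us =>
    have hx := h 1 (by omega)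
    rw [nprof_cons_one, show nprof ([] : Forest α) 1 = none from by
      simp [nprof, treeAt, preorder, subtreesL]] at hx
    cases hx
  | PTree.node a cs :: ts, [] =>
    have hx := h 1 (by omega)
    rw [nprof_cons_one, show nprof ([] : Forest α) 1 = none from by
      simp [nprof, treeAt, preorder, subtreesL]] at hx
    cases hx
  | PTree.node a cs :: ts, PTree.node b ds :: us =>
    have h1 := h 1 (by omega)
    rw [nprof_cons_one, nprof_cons_one] at h1
    have hab : a = b ∧ fsize cs = fsize ds := by
      have := Option.some.inj h1
      exact ⟨congrArg Prod.fst this, by have := congrArg Prod.snd this; simpa using this⟩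
    have hcd : cs = ds := by
      apply forest_eq_of_nprof
      intro j hj
      rcases le_or_gt j (fsize cs) with hjm | hjh
      · have := h (j + 1) (by omega)
        rw [nprof_cons_mid a cs ts (by omega) (by omega),
          nprof_cons_mid b ds us (by omega) (by omega)] at this
        simpa using this
      · rw [(nprof_none_iff hj).2 hjh, (nprof_none_iff hj).2 (by omega)]
    have hts : ts = us := by
      apply forest_eq_of_nprof
      intro j hj
      have hfd : fsize cs = fsize ds := hab.2
      have hthis := h (j + (1 + fsize cs)) (by omega)
      rw [nprof_cons_high a cs ts (by omega), nprof_cons_high b ds us (by omega),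
        show j + (1 + fsize cs) - (1 + fsize cs) = j from by omega,
        show j + (1 + fsize cs) - (1 + fsize ds) = j from by omega] at hthis
      exact hthis
    rw [hab.1, hcd, hts]
  termination_by sizeOf F

end Aux3
section Aux4
variable {α : Type}

theorem forest_ne_of_fsize {F G : Forest α} (h : fsize F ≠ fsize G) : F ≠ G :=
  fun he => h (by rw [he])

theorem applyDel_splice (A : Forest α) (y : α) (cs B : Forest α) :
    applyDel (fsize A + 1) (A ++ PTree.node y cs :: B) = A ++ (cs ++ B) := by
  match A with
  | [] =>
    rw [fsize_nil, List.nil_append, applyDel, if_neg (by omega), if_pos rfl]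
    rfl
  | PTree.node a as :: ts =>
    rw [fsize_cons, List.cons_append, applyDel, if_neg (by omega), if_neg (by omega),
      if_neg (by rw [size_eq]; omega)]
    rw [show 1 + fsize as + fsize ts + 1 - size (PTree.node a as) = fsize ts + 1 from by
      rw [size_eq]; omega]
    rw [applyDel_splice ts y cs B]
    rfl
  termination_by sizeOf A

theorem labelAt_splice (A : Forest α) (y : α) (cs B : Forest α) :
    labelAt (A ++ PTree.node y cs :: B) (fsize A + 1) = some y := by
  show (treeAt _ _).map PTree.label = _
  rw [treeAt_append A _ (by omega), if_neg (by omega),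
    show fsize A + 1 - fsize A = 1 from by omega, treeAt_cons_one]
  rfl

theorem insRoot_ne_inv {y : α} {l r : ℕ} {F : Forest α} (h : insRoot y l r F ≠ F) :
    ∃ p, 1 ≤ p ∧ applyDel p (insRoot y l r F) = F ∧ labelAt (insRoot y l r F) p = some y := by
  rw [insRoot] at h ⊢
  by_cases hg : r > F.length + 1 ∨ l > r ∨ l < 1
  · rw [if_pos hg] at h; exact absurd rfl h
  · rw [if_neg hg] at h ⊢
    by_cases hlr : l = r
    · rw [if_pos hlr] at h ⊢
      refine ⟨fsize (F.take (l - 1)) + 1, by omega, ?_, ?_⟩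
      · rw [show F.take (l - 1) ++ [PTree.node y []] ++ F.drop (l - 1)
            = F.take (l - 1) ++ (PTree.node y [] :: F.drop (l - 1)) from by simp]
        rw [applyDel_splice]
        simp
      · rw [show F.take (l - 1) ++ [PTree.node y []] ++ F.drop (l - 1)
            = F.take (l - 1) ++ (PTree.node y [] :: F.drop (l - 1)) from by simp]
        exact labelAt_splice _ y _ _
    · rw [if_neg hlr] at h ⊢
      refine ⟨fsize (F.take (l - 1)) + 1, by omega, ?_, ?_⟩
      · rw [show F.take (l - 1) ++ [PTree.node y ((F.drop (l - 1)).take (r - l))] ++ F.drop (r - 1)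
            = F.take (l - 1) ++ (PTree.node y ((F.drop (l - 1)).take (r - l)) :: F.drop (r - 1)) from by simp]
        rw [applyDel_splice, ← List.append_assoc]
        rw [show F.take (l - 1) ++ (F.drop (l - 1)).take (r - l) = F.take (r - 1) from by
          rw [← List.take_add]
          congr 1
          omega]
        exact List.take_append_drop _ F
      · rw [show F.take (l - 1) ++ [PTree.node y ((F.drop (l - 1)).take (r - l))] ++ F.drop (r - 1)
            = F.take (l - 1) ++ (PTree.node y ((F.drop (l - 1)).take (r - l)) :: F.drop (r - 1)) from by simp]
        exact labelAt_splice _ y _ _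

theorem applyIns_ne_inv (y : α) (l r i : ℕ) (F : Forest α) (h : applyIns y l r i F ≠ F) :
    ∃ p, 1 ≤ p ∧ applyDel p (applyIns y l r i F) = F ∧
      labelAt (applyIns y l r i F) p = some y := by
  match i, F with
  | 0, F =>
    rw [applyIns] at h ⊢
    exact insRoot_ne_inv h
  | i + 1, [] =>
    rw [applyIns] at h
    exact absurd rfl h
  | i + 1, PTree.node a cs :: ts =>
    rw [applyIns] at h ⊢
    by_cases hc : i + 1 ≤ size (PTree.node a cs)
    · rw [if_pos hc] at h ⊢
      have h' : applyIns y l r i cs ≠ cs := by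
        intro he; exact h (by rw [he])
      obtain ⟨p, hp1, hp2, hp3⟩ := applyIns_ne_inv y l r i cs h'
      have hple : ¬ fsize (applyIns y l r i cs) < p := by
        intro hcon
        have hout := applyDel_out p (applyIns y l r i cs) (Or.inr hcon)
        rw [hp2] at hout
        exact h' hout.symm
      refine ⟨p + 1, by omega, ?_, ?_⟩
      · rw [applyDel, if_neg (by omega), if_neg (by omega),
          if_pos (by rw [size_eq]; omega),
          show p + 1 - 1 = p from by omega, hp2]
      · show (treeAt _ _).map PTree.label = _
        rw [treeAt_cons_mid a _ ts (by omega) (by omega),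
          show p + 1 - 1 = p from by omega]
        exact hp3
    · rw [if_neg hc] at h ⊢
      have hst : size (PTree.node a cs) = 1 + fsize cs := size_eq a cs
      have h' : applyIns y l r (i + 1 - size (PTree.node a cs)) ts ≠ ts := by
        intro he; exact h (by rw [he])
      obtain ⟨p, hp1, hp2, hp3⟩ := applyIns_ne_inv y l r (i + 1 - size (PTree.node a cs)) ts h'
      refine ⟨p + size (PTree.node a cs), by omega, ?_, ?_⟩
      · rw [applyDel, if_neg (by omega), if_neg (by omega), if_neg (by omega),
          show p + size (PTree.node a cs) - size (PTree.node a cs) = p from by omega, hp2]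
      · show (treeAt _ _).map PTree.label = _
        rw [treeAt_cons_high a _ _ (by omega),
          show p + size (PTree.node a cs) - (1 + fsize cs) = p from by omega]
        exact hp3
  termination_by sizeOf F

theorem fsize_applyIns_ne {y : α} {l r i : ℕ} {F : Forest α} (h : applyIns y l r i F ≠ F) :
    fsize (applyIns y l r i F) = fsize F + 1 := by
  obtain ⟨p, hp1, hp2, _⟩ := applyIns_ne_inv y l r i F h
  have hple : ¬ fsize (applyIns y l r i F) < p := by
    intro hcon
    rw [applyDel_out p _ (Or.inr hcon)] at hp2
    exact h hp2
  have := fsize_applyDel p (applyIns y l r i F) hp1 (by omega)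
  rw [hp2] at this
  omega

theorem exists_ins_inverse (j : ℕ) (F : Forest α) (h1 : 1 ≤ j) (h2 : j ≤ fsize F) :
    ∃ (i l r : ℕ) (y : α), i + 1 ≤ fsize F ∧ labelAt F j = some y ∧
      applyIns y l r i (applyDel j F) = F := by
  match F with
  | [] => rw [fsize_nil] at h2; omega
  | PTree.node a cs :: ts =>
    have hfs : fsize (PTree.node a cs :: ts) = 1 + fsize cs + fsize ts := fsize_cons a cs ts
    rcases Nat.eq_or_lt_of_le h1 with hj1 | hj2
    · -- j = 1
      refine ⟨0, 1, cs.length + 1, a, by omega, ?_, ?_⟩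
      · rw [← hj1]
        show (treeAt _ _).map PTree.label = _
        rw [treeAt_cons_one]
        rfl
      · rw [← hj1, applyDel, if_neg (by omega), if_pos rfl]
        have hdr : delRoot (PTree.node a cs :: ts) = cs ++ ts := rfl
        rw [hdr, applyIns, insRoot, if_neg (by
          simp only [List.length_append, gt_iff_lt, not_or, not_lt]
          refine ⟨by omega, by omega, by omega⟩)]
        by_cases hcs : cs = []
        · subst hcs
          rw [if_pos (by simp)]
          simp
        · rw [if_neg (by
            intro hcon
            exact hcs (List.length_eq_zero_iff.1 (by omega)))]
          simp [List.take_left' rfl, List.drop_left' rfl]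
    · rcases le_or_gt j (1 + fsize cs) with hjm | hjh
      · -- j within head
        obtain ⟨i, l, r, y, hi, hlab, happ⟩ := exists_ins_inverse (j - 1) cs (by omega) (by omega)
        have hdel : applyDel j (PTree.node a cs :: ts) = PTree.node a (applyDel (j - 1) cs) :: ts := by
          rw [applyDel, if_neg (by omega), if_neg (by omega), if_pos (by rw [size_eq]; omega)]
        have hfs' : fsize (applyDel (j - 1) cs) + 1 = fsize cs :=
          fsize_applyDel (j - 1) cs (by omega) (by omega)
        refine ⟨i + 1, l, r, y, by omega, ?_, ?_⟩
        · show (treeAt _ _).map PTree.label = _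
          rw [treeAt_cons_mid a cs ts (by omega) (by omega)]
          exact hlab
        · rw [hdel, applyIns, if_pos (by rw [size_eq]; omega), happ]
      · -- j beyond head
        obtain ⟨i, l, r, y, hi, hlab, happ⟩ :=
          exists_ins_inverse (j - (1 + fsize cs)) ts (by omega) (by omega)
        have hdel : applyDel j (PTree.node a cs :: ts)
            = PTree.node a cs :: applyDel (j - (1 + fsize cs)) ts := by
          rw [applyDel, if_neg (by omega), if_neg (by omega), if_neg (by rw [size_eq]; omega),
            show j - size (PTree.node a cs) = j - (1 + fsize cs) from by rw [size_eq]]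
        have hfs' : fsize (applyDel (j - (1 + fsize cs)) ts) + 1 = fsize ts :=
          fsize_applyDel (j - (1 + fsize cs)) ts (by omega) (by omega)
        have hlabF : labelAt (PTree.node a cs :: ts) j = some y := by
          show (treeAt _ _).map PTree.label = _
          rw [treeAt_cons_high a cs ts (by omega)]
          exact hlab
        set ts' := applyDel (j - (1 + fsize cs)) ts with hts'
        have htsne : ts' ≠ ts := forest_ne_of_fsize (by omega)
        rcases Nat.eq_zero_or_pos i with hi0 | hipos
        · -- root-level insertion, shift l r by one
          subst hi0
          rw [applyIns] at happ
          have hg : ¬ (r > ts'.length + 1 ∨ l > r ∨ l < 1) := by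
            intro hgt
            rw [insRoot, if_pos hgt] at happ
            exact htsne happ
          rw [insRoot, if_neg hg] at happ
          refine ⟨0, l + 1, r + 1, y, by omega, hlabF, ?_⟩
          rw [hdel, applyIns, insRoot, if_neg (by
            simp only [List.length_cons]
            push_neg
            push_neg at hg
            refine ⟨by omega, by omega, by omega⟩)]
          by_cases hlr : l = r
          · rw [if_pos (by omega)]
            rw [if_pos hlr] at happ
            rw [show l + 1 - 1 = (l - 1) + 1 from by omega]
            rw [List.take_succ_cons, List.drop_succ_cons]
            rw [List.cons_append, List.cons_append, happ]
          · rw [if_neg (by omega)]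
            rw [if_neg hlr] at happ
            rw [show l + 1 - 1 = (l - 1) + 1 from by omega,
              show r + 1 - 1 = (r - 1) + 1 from by omega,
              show r + 1 - (l + 1) = r - l from by omega]
            rw [List.take_succ_cons, List.drop_succ_cons, List.drop_succ_cons]
            rw [List.cons_append, List.cons_append, happ]
        · -- insertion inside ts'
          refine ⟨i + (1 + fsize cs), l, r, y, by omega, hlabF, ?_⟩
          obtain ⟨m, hm⟩ : ∃ m, i + (1 + fsize cs) = m + 1 := ⟨i + fsize cs, by omega⟩
          rw [hdel, hm, applyIns, if_neg (by rw [size_eq]; omega),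
            show m + 1 - size (PTree.node a cs) = i from by rw [size_eq]; omega, happ]
  termination_by sizeOf F

theorem applyScript_append (δ₁ δ₂ : List (Edit α)) (F : Forest α) :
    applyScript (δ₁ ++ δ₂) F = applyScript δ₂ (applyScript δ₁ F) := by
  simp [applyScript, List.foldl_append]

theorem scriptCost_append (c : Cost α) (δ₁ δ₂ : List (Edit α)) (F : Forest α) :
    scriptCost c (δ₁ ++ δ₂) F = scriptCost c δ₁ F + scriptCost c δ₂ (applyScript δ₁ F) := by
  induction δ₁ generalizing F with
  | nil => simp [scriptCost, applyScript]
  | cons e es ih =>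
    rw [List.cons_append, scriptCost, scriptCost, ih (e.apply F)]
    have : applyScript (e :: es) F = applyScript es (e.apply F) := rfl
    rw [this]
    ring

theorem editCost_nonneg {c : Cost α} (hnn : Nonneg c) (e : Edit α) (F : Forest α) :
    0 ≤ editCost c e F := by
  rw [editCost.eq_def]
  split
  · exact le_refl 0
  · cases e <;> exact hnn _ _

theorem scriptCost_nonneg {c : Cost α} (hnn : Nonneg c) (δ : List (Edit α)) (F : Forest α) :
    0 ≤ scriptCost c δ F := by
  induction δ generalizing F with
  | nil => exact le_refl 0
  | cons e es ih =>
    rw [scriptCost]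
    have := editCost_nonneg hnn e F
    have := ih (e.apply F)
    linarith

end Aux4
section Aux5
variable {α : Type}

theorem mapCost_normal (c : Cost α) {F G : Forest α} {M : Finset (ℕ × ℕ)}
    (hM : IsTreeMapping F G M) :
    mapCost c F G M =
      (∑ k ∈ Finset.Icc 1 (fsize F), c (labelAt F k) none)
      + (∑ j ∈ Finset.Icc 1 (fsize G), c none (labelAt G j))
      + ∑ p ∈ M, (c (labelAt F p.1) (labelAt G p.2)
          - c (labelAt F p.1) none - c none (labelAt G p.2)) := by
  obtain ⟨hb, hpw⟩ := hM
  have hinj1 : Set.InjOn Prod.fst (M : Set (ℕ × ℕ)) := by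
    intro p hp q hq h
    have h1 := (hpw p hp q hq).1
    have h2 := (hpw p hp q hq).2.1
    exact Prod.ext h (h1.1 h)
  have hinj2 : Set.InjOn Prod.snd (M : Set (ℕ × ℕ)) := by
    intro p hp q hq h
    have h1 := (hpw p hp q hq).1
    exact Prod.ext (h1.2 h) h
  have hfst : (Finset.Icc 1 (fsize F)).filter (fun k => ¬ ∀ p ∈ M, p.1 ≠ k)
      = M.image Prod.fst := by
    ext k
    simp only [Finset.mem_filter, Finset.mem_image, Finset.mem_Icc, not_forall, not_not,
      exists_prop]
    constructor
    · rintro ⟨_, p, hp, hk⟩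
      exact ⟨p, hp, hk⟩
    · rintro ⟨p, hp, rfl⟩
      exact ⟨⟨(hb p hp).1, (hb p hp).2.1⟩, p, hp, rfl⟩
  have hsnd : (Finset.Icc 1 (fsize G)).filter (fun j => ¬ ∀ p ∈ M, p.2 ≠ j)
      = M.image Prod.snd := by
    ext k
    simp only [Finset.mem_filter, Finset.mem_image, Finset.mem_Icc, not_forall, not_not,
      exists_prop]
    constructor
    · rintro ⟨_, p, hp, hk⟩
      exact ⟨p, hp, hk⟩
    · rintro ⟨p, hp, rfl⟩
      exact ⟨⟨(hb p hp).2.2.1, (hb p hp).2.2.2⟩, p, hp, rfl⟩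
  have hs1 := Finset.sum_filter_add_sum_filter_not (Finset.Icc 1 (fsize F))
    (fun k => ∀ p ∈ M, p.1 ≠ k) (fun k => c (labelAt F k) none)
  have hs2 := Finset.sum_filter_add_sum_filter_not (Finset.Icc 1 (fsize G))
    (fun j => ∀ p ∈ M, p.2 ≠ j) (fun j => c none (labelAt G j))
  rw [hfst] at hs1
  rw [hsnd] at hs2
  rw [Finset.sum_image hinj1] at hs1
  rw [Finset.sum_image hinj2] at hs2
  rw [mapCost, Finset.sum_sub_distrib, Finset.sum_sub_distrib]
  linarith

theorem sum_shift (f : ℕ → ℝ) (n i : ℕ) (h1 : 1 ≤ i) (h2 : i ≤ n) :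
    ∑ k ∈ Finset.Icc 1 n, f k
      = f i + ∑ j ∈ Finset.Icc 1 (n - 1), f (if j < i then j else j + 1) := by
  have hinj : Set.InjOn (fun j => if j < i then j else j + 1) ((Finset.Icc 1 (n - 1) : Finset ℕ) : Set ℕ) := by
    intro a _ b _ h
    simp only at h
    split_ifs at h <;> omega
  have himg : (Finset.Icc 1 (n - 1)).image (fun j => if j < i then j else j + 1)
      = (Finset.Icc 1 n).erase i := by
    ext k
    simp only [Finset.mem_image, Finset.mem_erase, Finset.mem_Icc]
    constructor
    · rintro ⟨j, ⟨hj1, hj2⟩, rfl⟩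
      split_ifs <;> refine ⟨by omega, by omega, by omega⟩
    · rintro ⟨hne, hk1, hkn⟩
      refine ⟨if k < i then k else k - 1, ⟨?_, ?_⟩, ?_⟩ <;> split_ifs <;> omega
  have := Finset.add_sum_erase (Finset.Icc 1 n) f (Finset.mem_Icc.2 ⟨h1, h2⟩)
  rw [← this, ← himg, Finset.sum_image hinj]

/-- The identity tree mapping. -/
noncomputable def idMap (n : ℕ) : Finset (ℕ × ℕ) := (Finset.Icc 1 n).image (fun i => (i, i))

theorem idMap_isTreeMapping (F : Forest α) : IsTreeMapping F F (idMap (fsize F)) := by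
  constructor
  · intro p hp
    rw [idMap, Finset.mem_image] at hp
    obtain ⟨i, hi, rfl⟩ := hp
    rw [Finset.mem_Icc] at hi
    exact ⟨hi.1, hi.2, hi.1, hi.2⟩
  · intro p hp q hq
    rw [idMap, Finset.mem_image] at hp hq
    obtain ⟨i, _, rfl⟩ := hp
    obtain ⟨k, _, rfl⟩ := hq
    exact ⟨Iff.rfl, Iff.rfl, Iff.rfl⟩

theorem idMap_cost {c : Cost α} (hse : SelfEq c) (F : Forest α) :
    mapCost c F F (idMap (fsize F)) = 0 := by
  rw [mapCost_normal c (idMap_isTreeMapping F)]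
  rw [idMap, Finset.sum_image (by intro a _ b _ h; exact (Prod.ext_iff.1 h).1)]
  have he : ∀ i ∈ Finset.Icc 1 (fsize F),
      (c (labelAt F i) (labelAt F i) - c (labelAt F i) none - c none (labelAt F i))
      = (- c (labelAt F i) none) + (- c none (labelAt F i)) := by
    intro i _
    rw [hse]
    ring
  rw [Finset.sum_congr rfl he, Finset.sum_add_distrib, Finset.sum_neg_distrib,
    Finset.sum_neg_distrib]
  ring

theorem isTreeMapping_subset {F G : Forest α} {M M' : Finset (ℕ × ℕ)}
    (h : M' ⊆ M) (hM : IsTreeMapping F G M) : IsTreeMapping F G M' :=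
  ⟨fun p hp => hM.1 p (h hp), fun p hp q hq => hM.2 p (h hp) q (h hq)⟩

end Aux5
section Aux6
variable {α : Type}

/-- Pushing a tree mapping from `applyDel i F` back to `F` (first coordinate). -/
theorem treeMapping_delshift_left {F H : Forest α} {i : ℕ} (h1 : 1 ≤ i) (h2 : i ≤ fsize F)
    {M : Finset (ℕ × ℕ)} (hM : IsTreeMapping (applyDel i F) H M) :
    IsTreeMapping F H (M.image (fun p => (if p.1 < i then p.1 else p.1 + 1, p.2))) := by
  obtain ⟨hb, hpw⟩ := hM
  have hfs := fsize_applyDel i F h1 h2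
  constructor
  · intro p hp
    rw [Finset.mem_image] at hp
    obtain ⟨q, hq, rfl⟩ := hp
    have hbq := hb q hq
    exact ⟨by split_ifs <;> omega, by split_ifs <;> omega, hbq.2.2.1, hbq.2.2.2⟩
  · intro p hp q hq
    rw [Finset.mem_image] at hp hq
    obtain ⟨p0, hp0, rfl⟩ := hp
    obtain ⟨q0, hq0, rfl⟩ := hq
    have hbp := hb p0 hp0
    have hbq := hb q0 hq0
    have h3 := hpw p0 hp0 q0 hq0
    refine ⟨?_, ?_, ?_⟩
    · constructor
      · intro h
        simp only at h
        exact h3.1.mp (by split_ifs at h <;> omega)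
      · intro h
        have := h3.1.mpr h
        simp only
        split_ifs <;> omega
    · constructor
      · intro h
        simp only at h
        exact h3.2.1.mp (by split_ifs at h <;> omega)
      · intro h
        have := h3.2.1.mpr h
        simp only
        split_ifs <;> omega
    · simp only
      rw [← anc_applyDel h1 h2 hbp.1]
      exact h3.2.2

theorem injOn_delshift {i : ℕ} {M : Finset (ℕ × ℕ)} :
    Set.InjOn (fun p : ℕ × ℕ => (if p.1 < i then p.1 else p.1 + 1, p.2))
      (M : Set (ℕ × ℕ)) := by
  intro a _ b _ h
  simp only [Prod.ext_iff] at h ⊢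
  constructor
  · have := h.1
    split_ifs at this <;> omega
  · exact h.2

theorem mapCost_delshift_left (c : Cost α) {F H : Forest α} {i : ℕ}
    (h1 : 1 ≤ i) (h2 : i ≤ fsize F)
    {M : Finset (ℕ × ℕ)} (hM : IsTreeMapping (applyDel i F) H M) :
    mapCost c F H (M.image (fun p => (if p.1 < i then p.1 else p.1 + 1, p.2)))
      = c (labelAt F i) none + mapCost c (applyDel i F) H M := by
  have hfs := fsize_applyDel i F h1 h2
  rw [mapCost_normal c (treeMapping_delshift_left h1 h2 hM), mapCost_normal c hM,
    Finset.sum_image (injOn_delshift), sum_shift (fun k => c (labelAt F k) none) (fsize F) i h1 h2]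
  have e1 : ∑ j ∈ Finset.Icc 1 (fsize F - 1), c (labelAt F (if j < i then j else j + 1)) none
      = ∑ j ∈ Finset.Icc 1 (fsize (applyDel i F)), c (labelAt (applyDel i F) j) none := by
    rw [show fsize F - 1 = fsize (applyDel i F) from by omega]
    refine Finset.sum_congr rfl (fun j hj => ?_)
    rw [Finset.mem_Icc] at hj
    rw [labelAt_applyDel h1 h2 hj.1]
  have e2 : ∑ p ∈ M,
        (c (labelAt F (if p.1 < i then p.1 else p.1 + 1)) (labelAt H p.2)
          - c (labelAt F (if p.1 < i then p.1 else p.1 + 1)) none - c none (labelAt H p.2))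
      = ∑ p ∈ M, (c (labelAt (applyDel i F) p.1) (labelAt H p.2)
          - c (labelAt (applyDel i F) p.1) none - c none (labelAt H p.2)) := by
    refine Finset.sum_congr rfl (fun p hp => ?_)
    rw [labelAt_applyDel h1 h2 (hM.1 p hp).1]
  rw [e1, e2]
  ring

/-- Pushing a tree mapping that avoids index `i` from `F` to `applyDel i F`. -/
theorem treeMapping_delshift_left_rev {F H : Forest α} {i : ℕ} (h1 : 1 ≤ i) (h2 : i ≤ fsize F)
    {M : Finset (ℕ × ℕ)} (hM : IsTreeMapping F H M) (hni : ∀ p ∈ M, p.1 ≠ i) :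
    IsTreeMapping (applyDel i F) H (M.image (fun p => (if p.1 < i then p.1 else p.1 - 1, p.2)))
    ∧ (M.image (fun p => (if p.1 < i then p.1 else p.1 - 1, p.2))).image
        (fun p => (if p.1 < i then p.1 else p.1 + 1, p.2)) = M := by
  obtain ⟨hb, hpw⟩ := hM
  have hfs := fsize_applyDel i F h1 h2
  have hback : ∀ p ∈ M,
      (fun p : ℕ × ℕ => (if p.1 < i then p.1 else p.1 + 1, p.2))
        ((fun p : ℕ × ℕ => (if p.1 < i then p.1 else p.1 - 1, p.2)) p) = p := by
    intro p hp
    have := hb p hp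
    have := hni p hp
    simp only [Prod.ext_iff]
    refine ⟨by split_ifs <;> omega, by simp⟩
  constructor
  · constructor
    · intro p hp
      rw [Finset.mem_image] at hp
      obtain ⟨q, hq, rfl⟩ := hp
      have hbq := hb q hq
      have hnq := hni q hq
      exact ⟨by split_ifs <;> omega, by split_ifs <;> omega, hbq.2.2.1, hbq.2.2.2⟩
    · intro p hp q hq
      rw [Finset.mem_image] at hp hq
      obtain ⟨p0, hp0, rfl⟩ := hp
      obtain ⟨q0, hq0, rfl⟩ := hq
      have hbp := hb p0 hp0
      have hbq := hb q0 hq0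
      have hnp := hni p0 hp0
      have hnq := hni q0 hq0
      have h3 := hpw p0 hp0 q0 hq0
      refine ⟨?_, ?_, ?_⟩
      · constructor
        · intro h
          simp only at h
          exact h3.1.mp (by split_ifs at h <;> omega)
        · intro h
          have := h3.1.mpr h
          simp only
          split_ifs <;> omega
      · constructor
        · intro h
          simp only at h
          exact h3.2.1.mp (by split_ifs at h <;> omega)
        · intro h
          have := h3.2.1.mpr h
          simp only
          split_ifs <;> omega
      · simp only
        rw [anc_applyDel h1 h2 (by split_ifs <;> omega)]
        rw [show (if (if p0.1 < i then p0.1 else p0.1 - 1) < i then (if p0.1 < i then p0.1 else p0.1 - 1)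
              else (if p0.1 < i then p0.1 else p0.1 - 1) + 1) = p0.1 from by split_ifs <;> omega,
          show (if (if q0.1 < i then q0.1 else q0.1 - 1) < i then (if q0.1 < i then q0.1 else q0.1 - 1)
              else (if q0.1 < i then q0.1 else q0.1 - 1) + 1) = q0.1 from by split_ifs <;> omega]
        exact h3.2.2
  · rw [Finset.image_image]
    calc M.image _ = M.image id := Finset.image_congr (fun p hp => hback p hp)
    _ = M := Finset.image_id
end Aux6
section Aux7
variable {α : Type}

theorem applyRep_out (y : α) (i : ℕ) (F : Forest α) (h : i < 1 ∨ fsize F < i) :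
    applyRep y i F = F := by
  apply forest_eq_of_nprof
  intro j hj
  rw [nprof_applyRep y i F j hj]
  by_cases hji : j = i
  · subst hji
    rw [if_pos rfl, (nprof_none_iff hj).2 (by omega)]
    rfl
  · rw [if_neg hji]

theorem treeMapping_rep {y : α} {i : ℕ} {F G : Forest α} {M : Finset (ℕ × ℕ)}
    (hM : IsTreeMapping (applyRep y i F) G M) : IsTreeMapping F G M := by
  obtain ⟨hb, hpw⟩ := hM
  constructor
  · intro p hp
    have := hb p hp
    rw [fsize_applyRep] at this
    exact this
  · intro p hp q hq
    have h3 := hpw p hp q hq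
    have hbp := hb p hp
    exact ⟨h3.1, h3.2.1, (anc_applyRep y i F hbp.1).symm.trans h3.2.2⟩

theorem mapCost_rep_le (c : Cost α) (hnn : Nonneg c) (htr : Triangle c)
    {y : α} {i : ℕ} {F G : Forest α} {M : Finset (ℕ × ℕ)}
    (h1 : 1 ≤ i) (h2 : i ≤ fsize F) (hM : IsTreeMapping (applyRep y i F) G M) :
    mapCost c F G M ≤ c (labelAt F i) (some y) + mapCost c (applyRep y i F) G M := by
  set F' := applyRep y i F with hF'
  have hMF : IsTreeMapping F G M := treeMapping_rep hM
  rw [mapCost_normal c hMF, mapCost_normal c hM]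
  have hfs : fsize F' = fsize F := fsize_applyRep y i F
  have hl : ∀ k, 1 ≤ k → k ≠ i → labelAt F' k = labelAt F k := by
    intro k hk hne
    rw [hF', labelAt_applyRep y i F hk, if_neg (by simp [hne])]
  have hli : labelAt F' i = some y := by
    rw [hF', labelAt_applyRep y i F h1, if_pos ⟨rfl, h2⟩]
  have hdel : ∑ k ∈ Finset.Icc 1 (fsize F), c (labelAt F k) none
      - ∑ k ∈ Finset.Icc 1 (fsize F'), c (labelAt F' k) none
      = c (labelAt F i) none - c (some y) none := by
    rw [hfs, ← Finset.sum_sub_distrib]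
    rw [Finset.sum_eq_single_of_mem i (Finset.mem_Icc.2 ⟨h1, h2⟩)
      (fun k hk hne => by
        rw [hl k (Finset.mem_Icc.1 hk).1 hne]; ring)]
    rw [hli]
  by_cases hex : ∃ p0 ∈ M, p0.1 = i
  · obtain ⟨p0, hp0, hp0i⟩ := hex
    have huniq : ∀ q ∈ M, q ≠ p0 → q.1 ≠ i := by
      intro q hq hne hqi
      exact hne (Prod.ext (by omega)
        ((hM.2 q hq p0 hp0).1.mp (by omega)))
    have hsum : ∑ p ∈ M, ((c (labelAt F p.1) (labelAt G p.2)
          - c (labelAt F p.1) none - c none (labelAt G p.2))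
        - (c (labelAt F' p.1) (labelAt G p.2)
          - c (labelAt F' p.1) none - c none (labelAt G p.2)))
        = (c (labelAt F i) (labelAt G p0.2) - c (labelAt F i) none)
          - (c (some y) (labelAt G p0.2) - c (some y) none) := by
      rw [Finset.sum_eq_single_of_mem p0 hp0
        (fun q hq hne => by
          rw [hl q.1 (hM.1 q hq).1 (huniq q hq hne)]; ring)]
      rw [hp0i, hli]
      ring
    rw [Finset.sum_sub_distrib] at hsum
    have htri := htr (labelAt F i) (some y) (labelAt G p0.2)
    linarith
  · push_neg at hex
    have hsum : ∑ p ∈ M, ((c (labelAt F p.1) (labelAt G p.2)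
          - c (labelAt F p.1) none - c none (labelAt G p.2))
        - (c (labelAt F' p.1) (labelAt G p.2)
          - c (labelAt F' p.1) none - c none (labelAt G p.2))) = 0 := by
      apply Finset.sum_eq_zero
      intro q hq
      rw [hl q.1 (hM.1 q hq).1 (hex q hq)]
      ring
    rw [Finset.sum_sub_distrib] at hsum
    have htri := htr (labelAt F i) (some y) none
    linarith

theorem treeMapping_delshift_right {F H : Forest α} {i : ℕ} (h1 : 1 ≤ i) (h2 : i ≤ fsize H)
    {M : Finset (ℕ × ℕ)} (hM : IsTreeMapping F (applyDel i H) M) :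
    IsTreeMapping F H (M.image (fun p => (p.1, if p.2 < i then p.2 else p.2 + 1))) := by
  obtain ⟨hb, hpw⟩ := hM
  have hfs := fsize_applyDel i H h1 h2
  constructor
  · intro p hp
    rw [Finset.mem_image] at hp
    obtain ⟨q, hq, rfl⟩ := hp
    have hbq := hb q hq
    exact ⟨hbq.1, hbq.2.1, by split_ifs <;> omega, by split_ifs <;> omega⟩
  · intro p hp q hq
    rw [Finset.mem_image] at hp hq
    obtain ⟨p0, hp0, rfl⟩ := hp
    obtain ⟨q0, hq0, rfl⟩ := hq
    have hbp := hb p0 hp0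
    have h3 := hpw p0 hp0 q0 hq0
    refine ⟨?_, ?_, ?_⟩
    · constructor
      · intro h
        have := h3.1.mp h
        simp only
        split_ifs <;> omega
      · intro h
        simp only at h
        exact h3.1.mpr (by split_ifs at h <;> omega)
    · constructor
      · intro h
        have := h3.2.1.mp h
        simp only
        split_ifs <;> omega
      · intro h
        simp only at h
        exact h3.2.1.mpr (by split_ifs at h <;> omega)
    · simp only
      rw [← anc_applyDel h1 h2 hbp.2.2.1]
      exact h3.2.2

theorem injOn_delshift_right {i : ℕ} {M : Finset (ℕ × ℕ)} :
    Set.InjOn (fun p : ℕ × ℕ => (p.1, if p.2 < i then p.2 else p.2 + 1))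
      (M : Set (ℕ × ℕ)) := by
  intro a _ b _ h
  simp only [Prod.ext_iff] at h ⊢
  refine ⟨h.1, ?_⟩
  have := h.2
  split_ifs at this <;> omega

theorem mapCost_delshift_right (c : Cost α) {F H : Forest α} {i : ℕ}
    (h1 : 1 ≤ i) (h2 : i ≤ fsize H)
    {M : Finset (ℕ × ℕ)} (hM : IsTreeMapping F (applyDel i H) M) :
    mapCost c F H (M.image (fun p => (p.1, if p.2 < i then p.2 else p.2 + 1)))
      = c none (labelAt H i) + mapCost c F (applyDel i H) M := by
  have hfs := fsize_applyDel i H h1 h2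
  rw [mapCost_normal c (treeMapping_delshift_right h1 h2 hM), mapCost_normal c hM,
    Finset.sum_image (injOn_delshift_right),
    sum_shift (fun k => c none (labelAt H k)) (fsize H) i h1 h2]
  have e1 : ∑ j ∈ Finset.Icc 1 (fsize H - 1), c none (labelAt H (if j < i then j else j + 1))
      = ∑ j ∈ Finset.Icc 1 (fsize (applyDel i H)), c none (labelAt (applyDel i H) j) := by
    rw [show fsize H - 1 = fsize (applyDel i H) from by omega]
    refine Finset.sum_congr rfl (fun j hj => ?_)
    rw [Finset.mem_Icc] at hj
    rw [labelAt_applyDel h1 h2 hj.1]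
  have e2 : ∑ p ∈ M,
        (c (labelAt F p.1) (labelAt H (if p.2 < i then p.2 else p.2 + 1))
          - c (labelAt F p.1) none - c none (labelAt H (if p.2 < i then p.2 else p.2 + 1)))
      = ∑ p ∈ M, (c (labelAt F p.1) (labelAt (applyDel i H) p.2)
          - c (labelAt F p.1) none - c none (labelAt (applyDel i H) p.2)) := by
    refine Finset.sum_congr rfl (fun p hp => ?_)
    rw [labelAt_applyDel h1 h2 (hM.1 p hp).2.2.1]
  rw [e1, e2]
  ring

theorem treeMapping_delshift_right_rev {F H : Forest α} {i : ℕ} (h1 : 1 ≤ i) (h2 : i ≤ fsize H)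
    {M : Finset (ℕ × ℕ)} (hM : IsTreeMapping F H M) (hni : ∀ p ∈ M, p.2 ≠ i) :
    IsTreeMapping F (applyDel i H) (M.image (fun p => (p.1, if p.2 < i then p.2 else p.2 - 1)))
    ∧ (M.image (fun p => (p.1, if p.2 < i then p.2 else p.2 - 1))).image
        (fun p => (p.1, if p.2 < i then p.2 else p.2 + 1)) = M := by
  obtain ⟨hb, hpw⟩ := hM
  have hfs := fsize_applyDel i H h1 h2
  have hback : ∀ p ∈ M,
      (fun p : ℕ × ℕ => (p.1, if p.2 < i then p.2 else p.2 + 1))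
        ((fun p : ℕ × ℕ => (p.1, if p.2 < i then p.2 else p.2 - 1)) p) = p := by
    intro p hp
    have := hb p hp
    have := hni p hp
    simp only [Prod.ext_iff]
    refine ⟨by simp, by split_ifs <;> omega⟩
  constructor
  · constructor
    · intro p hp
      rw [Finset.mem_image] at hp
      obtain ⟨q, hq, rfl⟩ := hp
      have hbq := hb q hq
      have hnq := hni q hq
      exact ⟨hbq.1, hbq.2.1, by split_ifs <;> omega, by split_ifs <;> omega⟩
    · intro p hp q hq
      rw [Finset.mem_image] at hp hq
      obtain ⟨p0, hp0, rfl⟩ := hp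
      obtain ⟨q0, hq0, rfl⟩ := hq
      have hbp := hb p0 hp0
      have hbq := hb q0 hq0
      have hnp := hni p0 hp0
      have hnq := hni q0 hq0
      have h3 := hpw p0 hp0 q0 hq0
      refine ⟨?_, ?_, ?_⟩
      · constructor
        · intro h
          have := h3.1.mp h
          simp only
          split_ifs <;> omega
        · intro h
          simp only at h
          exact h3.1.mpr (by split_ifs at h <;> omega)
      · constructor
        · intro h
          have := h3.2.1.mp h
          simp only
          split_ifs <;> omega
        · intro h
          simp only at h
          exact h3.2.1.mpr (by split_ifs at h <;> omega)
      · simp only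
        rw [anc_applyDel h1 h2 (by split_ifs <;> omega)]
        rw [show (if (if p0.2 < i then p0.2 else p0.2 - 1) < i then (if p0.2 < i then p0.2 else p0.2 - 1)
              else (if p0.2 < i then p0.2 else p0.2 - 1) + 1) = p0.2 from by split_ifs <;> omega,
          show (if (if q0.2 < i then q0.2 else q0.2 - 1) < i then (if q0.2 < i then q0.2 else q0.2 - 1)
              else (if q0.2 < i then q0.2 else q0.2 - 1) + 1) = q0.2 from by split_ifs <;> omega]
        exact h3.2.2
  · rw [Finset.image_image]
    calc M.image _ = M.image id := Finset.image_congr (fun p hp => hback p hp)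
    _ = M := Finset.image_id

theorem mapCost_erase (c : Cost α) {F G : Forest α} {M : Finset (ℕ × ℕ)}
    (hM : IsTreeMapping F G M) {p0 : ℕ × ℕ} (hp0 : p0 ∈ M) :
    mapCost c F G M = mapCost c F G (M.erase p0)
      + (c (labelAt F p0.1) (labelAt G p0.2)
        - c (labelAt F p0.1) none - c none (labelAt G p0.2)) := by
  rw [mapCost_normal c hM, mapCost_normal c (isTreeMapping_subset (Finset.erase_subset _ _) hM)]
  rw [← Finset.add_sum_erase M _ hp0]
  ring

end Aux7
section Aux8
variable {α : Type}

theorem script_to_mapping (c : Cost α) (hnn : Nonneg c) (hse : SelfEq c) (htr : Triangle c)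
    (δ : List (Edit α)) : ∀ (F : Forest α), ∃ M, IsTreeMapping F (applyScript δ F) M ∧
      mapCost c F (applyScript δ F) M ≤ scriptCost c δ F := by
  induction δ with
  | nil =>
    intro F
    refine ⟨idMap (fsize F), idMap_isTreeMapping F, ?_⟩
    have h1 : applyScript [] F = F := rfl
    have h2 : scriptCost c [] F = 0 := by rw [scriptCost]
    rw [h1, h2, idMap_cost hse]
  | cons e es ih =>
    intro F
    obtain ⟨M2, hM2, hc2⟩ := ih (e.apply F)
    have happ : applyScript (e :: es) F = applyScript es (e.apply F) := rfl
    have hcost : scriptCost c (e :: es) F = editCost c e F + scriptCost c es (e.apply F) := by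
      rw [scriptCost]
    rw [happ, hcost]
    by_cases hch : e.apply F = F
    · have hec : editCost c e F = 0 := by rw [editCost.eq_def, if_pos hch]
      rw [hch] at hM2 hc2 ⊢
      exact ⟨M2, hM2, by rw [hec]; linarith⟩
    · have hec0 := hch
      cases e with
      | del i =>
        simp only [Edit.apply] at hM2 hc2 hch ⊢
        have hr : 1 ≤ i ∧ i ≤ fsize F := by
          by_contra hcon
          exact hch (applyDel_out i F (by omega))
        have hec : editCost c (Edit.del i) F = c (labelAt F i) none := by
          rw [editCost.eq_def, if_neg (by simp only [Edit.apply]; exact hch)]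
        refine ⟨M2.image (fun p => (if p.1 < i then p.1 else p.1 + 1, p.2)),
          treeMapping_delshift_left hr.1 hr.2 hM2, ?_⟩
        rw [mapCost_delshift_left c hr.1 hr.2 hM2, hec]
        linarith
      | rep i y =>
        simp only [Edit.apply] at hM2 hc2 hch ⊢
        have hr : 1 ≤ i ∧ i ≤ fsize F := by
          by_contra hcon
          exact hch (applyRep_out y i F (by omega))
        have hec : editCost c (Edit.rep i y) F = c (labelAt F i) (some y) := by
          rw [editCost.eq_def, if_neg (by simp only [Edit.apply]; exact hch)]
        refine ⟨M2, treeMapping_rep hM2, ?_⟩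
        have hle := mapCost_rep_le c hnn htr hr.1 hr.2 hM2
        rw [hec]
        linarith
      | ins i y l r =>
        simp only [Edit.apply] at hM2 hc2 hch ⊢
        have hec : editCost c (Edit.ins i y l r) F = c none (some y) := by
          rw [editCost.eq_def, if_neg (by simp only [Edit.apply]; exact hch)]
        obtain ⟨p, hp1, hp2, hp3⟩ := applyIns_ne_inv y l r i F hch
        have hple : p ≤ fsize (applyIns y l r i F) := by
          by_contra hcon
          have hout := applyDel_out p (applyIns y l r i F) (Or.inr (by omega))
          rw [hp2] at hout
          exact hch hout.symm
        set Mf := M2.filter (fun q => q.1 ≠ p) with hMf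
        have hMfmap : IsTreeMapping (applyIns y l r i F)
            (applyScript es (applyIns y l r i F)) Mf :=
          isTreeMapping_subset (Finset.filter_subset _ _) hM2
        have hni : ∀ q ∈ Mf, q.1 ≠ p := fun q hq => (Finset.mem_filter.1 hq).2
        obtain ⟨hM1pre, himg⟩ := treeMapping_delshift_left_rev hp1 hple hMfmap hni
        have hM1 := hM1pre
        rw [hp2] at hM1
        refine ⟨_, hM1, ?_⟩
        have hco := mapCost_delshift_left c hp1 hple hM1pre
        rw [himg, hp2, hp3] at hco
        rw [hec]
        by_cases hex : ∃ p0 ∈ M2, p0.1 = p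
        · obtain ⟨p0, hp0, hp0p⟩ := hex
          have hMfer : Mf = M2.erase p0 := by
            ext q
            rw [hMf, Finset.mem_filter, Finset.mem_erase]
            constructor
            · rintro ⟨hq, hqp⟩
              refine ⟨fun he => hqp (by rw [he, hp0p]), hq⟩
            · rintro ⟨hne, hq⟩
              refine ⟨hq, fun hqp => hne ?_⟩
              exact Prod.ext (by rw [hqp, hp0p])
                ((hM2.2 q hq p0 hp0).1.mp (by rw [hqp, hp0p]))
          have her := mapCost_erase c hM2 hp0
          have hlp0 : labelAt (applyIns y l r i F) p0.1 = some y := by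
            rw [hp0p]; exact hp3
          rw [hlp0, ← hMfer] at her
          have htri := htr none (some y) (labelAt (applyScript es (applyIns y l r i F)) p0.2)
          linarith
        · push_neg at hex
          have hMfeq : Mf = M2 := Finset.filter_true_of_mem (fun q hq => hex q hq)
          rw [← hMfeq] at hc2
          have hn1 := hnn (some y) none
          have hn2 := hnn none (some y)
          linarith

end Aux8
section Aux9
variable {α : Type}

theorem sizeAt_out {F : Forest α} {j : ℕ} (h1 : 1 ≤ j) (h : fsize F < j) : sizeAt F j = 0 := by
  rw [sizeAt, (treeAt_none_iff h1).2 h]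
  rfl

theorem labelAt_out {F : Forest α} {j : ℕ} (h1 : 1 ≤ j) (h : fsize F < j) : labelAt F j = none := by
  rw [labelAt, (treeAt_none_iff h1).2 h]
  rfl

theorem sizeAt_applyRep (y : α) (i : ℕ) (F : Forest α) {j : ℕ} (hj : 1 ≤ j) :
    sizeAt (applyRep y i F) j = sizeAt F j := by
  rw [sizeAt_eq_nprof, sizeAt_eq_nprof, nprof_applyRep y i F j hj]
  split_ifs
  · rcases nprof F j with _ | p <;> rfl
  · rfl

theorem nprof_eq_of_label_size {F G : Forest α} {j : ℕ} (hf : fsize F = fsize G) (hj : 1 ≤ j)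
    (hl : labelAt F j = labelAt G j) (hs : sizeAt F j = sizeAt G j) :
    nprof F j = nprof G j := by
  rcases le_or_gt j (fsize F) with h | h
  · obtain ⟨t, ht⟩ := treeAt_isSome hj h
    obtain ⟨u, hu⟩ := treeAt_isSome hj (show j ≤ fsize G from hf ▸ h)
    rw [labelAt, labelAt, ht, hu] at hl
    rw [sizeAt, sizeAt, ht, hu] at hs
    simp only [Option.map_some, Option.getD_some] at hl hs
    rw [nprof, nprof, ht, hu]
    simp only [Option.map_some]
    rw [Option.some.inj hl, hs]
  · rw [(nprof_none_iff hj).2 (by omega), (nprof_none_iff hj).2 (by omega)]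

theorem mapCost_nonneg {c : Cost α} (hnn : Nonneg c) (F G : Forest α) (M : Finset (ℕ × ℕ)) :
    0 ≤ mapCost c F G M := by
  rw [mapCost]
  have h1 : (0:ℝ) ≤ ∑ p ∈ M, c (labelAt F p.1) (labelAt G p.2) :=
    Finset.sum_nonneg (fun p _ => hnn _ _)
  have h2 : (0:ℝ) ≤ ∑ i ∈ (Finset.Icc 1 (fsize F)).filter (fun i => ∀ p ∈ M, p.1 ≠ i),
      c (labelAt F i) none := Finset.sum_nonneg (fun p _ => hnn _ _)
  have h3 : (0:ℝ) ≤ ∑ j ∈ (Finset.Icc 1 (fsize G)).filter (fun j => ∀ p ∈ M, p.2 ≠ j),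
      c none (labelAt G j) := Finset.sum_nonneg (fun p _ => hnn _ _)
  linarith

theorem forest_empty_of_fsize {F : Forest α} (h : fsize F = 0) : F = [] := by
  match F with
  | [] => rfl
  | PTree.node a cs :: ts => rw [fsize_cons] at h; omega

/-- The relabeling script. -/
def relabelScript : ℕ → List α → List (Edit α)
  | _, [] => []
  | k, b :: bs => Edit.rep (k + 1) b :: relabelScript (k + 1) bs

theorem relabel_correct (c : Cost α) (hnn : Nonneg c) (G : Forest α) (k : ℕ) (F : Forest α)
    (hfs : fsize F = fsize G)
    (hsz : ∀ j, 1 ≤ j → sizeAt F j = sizeAt G j)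
    (hlab : ∀ j, 1 ≤ j → j ≤ k → labelAt F j = labelAt G j) :
    applyScript (relabelScript k (((preorder G).map PTree.label).drop k)) F = G ∧
    scriptCost c (relabelScript k (((preorder G).map PTree.label).drop k)) F
      ≤ ∑ j ∈ Finset.Icc (k + 1) (fsize G), c (labelAt F j) (labelAt G j) := by
  have hlen : ((preorder G).map PTree.label).length = fsize G := by
    rw [List.length_map]; rfl
  rcases le_or_gt (fsize G) k with hk | hk
  · -- base case: all labels already fixed
    have hdrop : ((preorder G).map PTree.label).drop k = [] := by
      rw [List.drop_eq_nil_iff, hlen]; exact hk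
    rw [hdrop, relabelScript]
    constructor
    · show F = G
      apply forest_eq_of_nprof
      intro j hj
      rcases le_or_gt j (fsize G) with hjn | hjn
      · exact nprof_eq_of_label_size hfs hj (hlab j hj (by omega)) (hsz j hj)
      · rw [(nprof_none_iff hj).2 (by omega), (nprof_none_iff hj).2 (by omega)]
    · rw [show scriptCost c [] F = 0 from by rw [scriptCost]]
      exact Finset.sum_nonneg (fun j _ => hnn _ _)
  · -- step
    have hklen : k < ((preorder G).map PTree.label).length := by omega
    have hdrop : ((preorder G).map PTree.label).drop k
        = ((preorder G).map PTree.label)[k] :: ((preorder G).map PTree.label).drop (k + 1) :=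
      List.drop_eq_getElem_cons hklen
    set b := ((preorder G).map PTree.label)[k] with hb
    have hlabG : labelAt G (k + 1) = some b := by
      rw [labelAt, treeAt]
      rw [hb, List.getElem_map]
      rw [show k + 1 - 1 = k from by omega]
      rw [List.getElem?_eq_getElem (by rw [show (preorder G).length = fsize G from rfl]; omega)]
      rfl
    rw [hdrop, relabelScript]
    set F2 := applyRep b (k + 1) F with hF2
    have happ2 : (Edit.rep (k + 1) b).apply F = F2 := rfl
    have hfs2 : fsize F2 = fsize F := fsize_applyRep b (k + 1) F
    have hsz2 : ∀ j, 1 ≤ j → sizeAt F2 j = sizeAt G j := by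
      intro j hj
      rw [hF2, sizeAt_applyRep b (k + 1) F hj]
      exact hsz j hj
    have hlab2 : ∀ j, 1 ≤ j → j ≤ k + 1 → labelAt F2 j = labelAt G j := by
      intro j hj hjk
      rw [hF2, labelAt_applyRep b (k + 1) F hj]
      by_cases hje : j = k + 1
      · rw [if_pos ⟨hje, by omega⟩, hje, hlabG]
      · rw [if_neg (by simp [hje])]
        exact hlab j hj (by omega)
    obtain ⟨ih1, ih2⟩ := relabel_correct c hnn G (k + 1) F2 (by omega) hsz2 hlab2
    constructor
    · show applyScript (relabelScript (k + 1) _) ((Edit.rep (k + 1) b).apply F) = G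
      rw [happ2]
      exact ih1
    · rw [scriptCost, happ2]
      have hec : editCost c (Edit.rep (k + 1) b) F ≤ c (labelAt F (k + 1)) (some b) := by
        rw [editCost.eq_def]
        split
        · exact hnn _ _
        · exact le_refl _
      have hsum : ∑ j ∈ Finset.Icc (k + 1) (fsize G), c (labelAt F j) (labelAt G j)
          = c (labelAt F (k + 1)) (labelAt G (k + 1))
            + ∑ j ∈ Finset.Icc (k + 2) (fsize G), c (labelAt F j) (labelAt G j) := by
        rw [show Finset.Icc (k + 1) (fsize G) = insert (k + 1) (Finset.Icc (k + 2) (fsize G)) from by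
          ext x; simp only [Finset.mem_Icc, Finset.mem_insert]; omega]
        rw [Finset.sum_insert (by simp only [Finset.mem_Icc]; omega)]
      have hcong : ∑ j ∈ Finset.Icc (k + 2) (fsize G), c (labelAt F2 j) (labelAt G j)
          = ∑ j ∈ Finset.Icc (k + 2) (fsize G), c (labelAt F j) (labelAt G j) := by
        refine Finset.sum_congr rfl (fun j hj => ?_)
        rw [Finset.mem_Icc] at hj
        rw [hF2, labelAt_applyRep b (k + 1) F (by omega), if_neg (by
          simp only [not_and]
          intro hje
          omega)]
      rw [hsum, hlabG]
      have ih2' : scriptCost c (relabelScript (k + 1)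
            (List.drop (k + 1) (List.map PTree.label (preorder G)))) F2
          ≤ ∑ j ∈ Finset.Icc (k + 2) (fsize G), c (labelAt F2 j) (labelAt G j) := ih2
      linarith
  termination_by fsize G - k

end Aux9
section Aux10
variable {α : Type}

theorem mapping_to_script (c : Cost α) (hnn : Nonneg c) (hse : SelfEq c) (htr : Triangle c) :
    ∀ (N : ℕ) (F G : Forest α) (M : Finset (ℕ × ℕ)), fsize F + fsize G ≤ N →
      IsTreeMapping F G M →
      ∃ δ, applyScript δ F = G ∧ scriptCost c δ F ≤ mapCost c F G M := by
  intro N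
  induction N with
  | zero =>
    intro F G M hN hM
    have hF : F = [] := forest_empty_of_fsize (by omega)
    have hG : G = [] := forest_empty_of_fsize (by omega)
    subst hF; subst hG
    exact ⟨[], rfl, by
      rw [show scriptCost c [] [] = 0 from by rw [scriptCost]]
      exact mapCost_nonneg hnn _ _ _⟩
  | succ N ihN =>
    intro F G M hN hM
    by_cases hdel : ∃ i ∈ Finset.Icc 1 (fsize F), ∀ p ∈ M, p.1 ≠ i
    · obtain ⟨i, hi, hni⟩ := hdel
      rw [Finset.mem_Icc] at hi
      obtain ⟨hM', himg⟩ := treeMapping_delshift_left_rev hi.1 hi.2 hM hni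
      have hfs := fsize_applyDel i F hi.1 hi.2
      obtain ⟨δ', hδ1, hδ2⟩ := ihN (applyDel i F) G _ (by omega) hM'
      have hco := mapCost_delshift_left c hi.1 hi.2 hM'
      rw [himg] at hco
      refine ⟨Edit.del i :: δ', ?_, ?_⟩
      · show applyScript δ' ((Edit.del i).apply F) = G
        simp only [Edit.apply]
        exact hδ1
      · rw [scriptCost]
        simp only [Edit.apply]
        have hne : applyDel i F ≠ F := forest_ne_of_fsize (by omega)
        have hec : editCost c (Edit.del i) F = c (labelAt F i) none := by
          rw [editCost.eq_def, if_neg (by simp only [Edit.apply]; exact hne)]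
        rw [hec]
        linarith
    · by_cases hins : ∃ j ∈ Finset.Icc 1 (fsize G), ∀ p ∈ M, p.2 ≠ j
      · obtain ⟨j, hj, hnj⟩ := hins
        rw [Finset.mem_Icc] at hj
        obtain ⟨hM', himg⟩ := treeMapping_delshift_right_rev hj.1 hj.2 hM hnj
        have hfs := fsize_applyDel j G hj.1 hj.2
        obtain ⟨δ', hδ1, hδ2⟩ := ihN F (applyDel j G) _ (by omega) hM'
        have hco := mapCost_delshift_right c hj.1 hj.2 hM'
        rw [himg] at hco
        obtain ⟨i2, l2, r2, y, hi2, hlab, happ⟩ := exists_ins_inverse j G hj.1 hj.2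
        refine ⟨δ' ++ [Edit.ins i2 y l2 r2], ?_, ?_⟩
        · rw [applyScript_append, hδ1]
          show (Edit.ins i2 y l2 r2).apply (applyDel j G) = G
          simp only [Edit.apply]
          exact happ
        · rw [scriptCost_append, hδ1]
          have hne : ¬ (Edit.ins i2 y l2 r2).apply (applyDel j G) = applyDel j G := by
            simp only [Edit.apply]
            rw [happ]
            exact forest_ne_of_fsize (by omega)
          have hec : editCost c (Edit.ins i2 y l2 r2) (applyDel j G) = c none (some y) := by
            rw [editCost.eq_def, if_neg hne]
          have hsc : scriptCost c [Edit.ins i2 y l2 r2] (applyDel j G)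
              = editCost c (Edit.ins i2 y l2 r2) (applyDel j G) := by
            rw [scriptCost, scriptCost]
            ring
          rw [hsc, hec]
          rw [hlab] at hco
          linarith
      · push_neg at hdel hins
        have hcov1 : ∀ i, 1 ≤ i → i ≤ fsize F → ∃ p ∈ M, p.1 = i :=
          fun i h1 h2 => hdel i (Finset.mem_Icc.2 ⟨h1, h2⟩)
        have hcov2 : ∀ j, 1 ≤ j → j ≤ fsize G → ∃ p ∈ M, p.2 = j :=
          fun j h1 h2 => hins j (Finset.mem_Icc.2 ⟨h1, h2⟩)
        have hinj1 : ∀ p ∈ M, ∀ q ∈ M, p.1 = q.1 → p = q :=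
          fun p hp q hq h => Prod.ext h ((hM.2 p hp q hq).1.mp h)
        have hinj2 : ∀ p ∈ M, ∀ q ∈ M, p.2 = q.2 → p = q :=
          fun p hp q hq h => Prod.ext ((hM.2 p hp q hq).1.mpr h) h
        have hdiag : ∀ p ∈ M, p.1 = p.2 := by
          intro p hp
          have hbp := hM.1 p hp
          have hA : (M.filter (fun q => q.1 ≤ p.1)).image Prod.fst = Finset.Icc 1 p.1 := by
            ext k
            simp only [Finset.mem_image, Finset.mem_filter, Finset.mem_Icc]
            constructor
            · rintro ⟨q, ⟨hq, hqle⟩, rfl⟩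
              exact ⟨(hM.1 q hq).1, hqle⟩
            · rintro ⟨hk1, hkle⟩
              obtain ⟨q, hq, hq1⟩ := hcov1 k hk1 (by omega)
              exact ⟨q, ⟨hq, by omega⟩, hq1⟩
          have hB : (M.filter (fun q => q.1 ≤ p.1)).image Prod.snd = Finset.Icc 1 p.2 := by
            ext k
            simp only [Finset.mem_image, Finset.mem_filter, Finset.mem_Icc]
            constructor
            · rintro ⟨q, ⟨hq, hqle⟩, rfl⟩
              exact ⟨(hM.1 q hq).2.2.1, (hM.2 q hq p hp).2.1.mp hqle⟩
            · rintro ⟨hk1, hkle⟩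
              obtain ⟨q, hq, hq2⟩ := hcov2 k hk1 (by omega)
              exact ⟨q, ⟨hq, (hM.2 q hq p hp).2.1.mpr (by omega)⟩, hq2⟩
          have hcA := Finset.card_image_of_injOn
            (f := (Prod.fst : ℕ × ℕ → ℕ)) (s := M.filter (fun q => q.1 ≤ p.1))
            (fun a ha b hb h => hinj1 a (Finset.filter_subset _ _ ha) b
              (Finset.filter_subset _ _ hb) h)
          have hcB := Finset.card_image_of_injOn
            (f := (Prod.snd : ℕ × ℕ → ℕ)) (s := M.filter (fun q => q.1 ≤ p.1))
            (fun a ha b hb h => hinj2 a (Finset.filter_subset _ _ ha) b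
              (Finset.filter_subset _ _ hb) h)
          rw [hA, Nat.card_Icc] at hcA
          rw [hB, Nat.card_Icc] at hcB
          omega
        have hn : fsize F = fsize G := by
          have hA : M.image Prod.fst = Finset.Icc 1 (fsize F) := by
            ext k
            simp only [Finset.mem_image, Finset.mem_Icc]
            constructor
            · rintro ⟨q, hq, rfl⟩
              exact ⟨(hM.1 q hq).1, (hM.1 q hq).2.1⟩
            · rintro ⟨hk1, hk2⟩
              exact hcov1 k hk1 hk2
          have hB : M.image Prod.snd = Finset.Icc 1 (fsize G) := by
            ext k
            simp only [Finset.mem_image, Finset.mem_Icc]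
            constructor
            · rintro ⟨q, hq, rfl⟩
              exact ⟨(hM.1 q hq).2.2.1, (hM.1 q hq).2.2.2⟩
            · rintro ⟨hk1, hk2⟩
              exact hcov2 k hk1 hk2
          have hcA := Finset.card_image_of_injOn
            (f := (Prod.fst : ℕ × ℕ → ℕ)) (s := M) (fun a ha b hb h => hinj1 a ha b hb h)
          have hcB := Finset.card_image_of_injOn
            (f := (Prod.snd : ℕ × ℕ → ℕ)) (s := M) (fun a ha b hb h => hinj2 a ha b hb h)
          rw [hA, Nat.card_Icc] at hcA
          rw [hB, Nat.card_Icc] at hcB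
          omega
        have hmd : ∀ i, 1 ≤ i → i ≤ fsize F → (i, i) ∈ M := by
          intro i h1 h2
          obtain ⟨p, hp, hp1⟩ := hcov1 i h1 h2
          have hd := hdiag p hp
          have hpe : p = (i, i) := Prod.ext hp1 (by omega)
          rw [← hpe]
          exact hp
        have hsz : ∀ j, 1 ≤ j → sizeAt F j = sizeAt G j := by
          intro j hj
          rcases le_or_gt j (fsize F) with hle | hgt
          · have hanc : ∀ k, 1 ≤ k → k ≤ fsize F → (AncestorIdx F j k ↔ AncestorIdx G j k) :=
              fun k h1 h2 => (hM.2 (j, j) (hmd j hj hle) (k, k) (hmd k h1 h2)).2.2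
            have hposF := sizeAt_pos hj hle
            have hposG := sizeAt_pos hj (show j ≤ fsize G by omega)
            have hdF := descBound F j hj hle
            have hdG := descBound G j hj (by omega)
            by_contra hne
            rcases Nat.lt_or_ge (sizeAt F j) (sizeAt G j) with hlt | hge
            · have h2 : AncestorIdx F j (j + sizeAt F j) :=
                (hanc (j + sizeAt F j) (by omega) (by omega)).2 ⟨by omega, by omega⟩
              have h2' : j < j + sizeAt F j ∧ j + sizeAt F j < j + sizeAt F j := h2
              omega
            · have hlt2 : sizeAt G j < sizeAt F j := by omega
              have h2 : AncestorIdx G j (j + sizeAt G j) :=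
                (hanc (j + sizeAt G j) (by omega) (by omega)).1 ⟨by omega, by omega⟩
              have h2' : j < j + sizeAt G j ∧ j + sizeAt G j < j + sizeAt G j := h2
              omega
          · rw [sizeAt_out hj hgt, sizeAt_out hj (by omega)]
        obtain ⟨happ, hcost⟩ := relabel_correct c hnn G 0 F hn hsz (fun j hj h0 => by omega)
        rw [List.drop_zero] at happ hcost
        refine ⟨relabelScript 0 ((preorder G).map PTree.label), happ, ?_⟩
        have hMdiag : M = (Finset.Icc 1 (fsize F)).image (fun i => (i, i)) := by
          ext q
          simp only [Finset.mem_image, Finset.mem_Icc]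
          constructor
          · intro hq
            exact ⟨q.1, ⟨(hM.1 q hq).1, (hM.1 q hq).2.1⟩, Prod.ext rfl (hdiag q hq)⟩
          · rintro ⟨i, ⟨h1, h2⟩, rfl⟩
            exact hmd i h1 h2
        rw [mapCost_normal c hM, hMdiag,
          Finset.sum_image (fun a _ b _ h => (Prod.ext_iff.1 h).1)]
        rw [Finset.sum_sub_distrib, Finset.sum_sub_distrib]
        have hcost' : scriptCost c (relabelScript 0 ((preorder G).map PTree.label)) F
            ≤ ∑ j ∈ Finset.Icc 1 (fsize F), c (labelAt F j) (labelAt G j) := by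
          rw [hn]
          exact hcost
        have he2 : ∑ j ∈ Finset.Icc 1 (fsize G), c none (labelAt G j)
            = ∑ j ∈ Finset.Icc 1 (fsize F), c none (labelAt G j) := by rw [hn]
        linarith

end Aux10
/-- If the cost function `c` is non-negative, self-equal and conforms
to the triangular inequality, then the minimum cost of an edit script transforming `X`
into `Y` equals the minimum cost of a tree mapping between `X` and `Y`. -/
theorem script_min_eq_mapping_min {α : Type} (c : Cost α) (hnn : Nonneg c)
    (hse : SelfEq c) (htr : Triangle c) (F G : Forest α) :
    sInf { r : ℝ | ∃ δ : List (Edit α), applyScript δ F = G ∧ scriptCost c δ F = r } =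
      sInf { r : ℝ | ∃ M : Finset (ℕ × ℕ), IsTreeMapping F G M ∧ mapCost c F G M = r } := by
  have hempty : IsTreeMapping F G (∅ : Finset (ℕ × ℕ)) :=
    ⟨fun p hp => absurd hp (Finset.notMem_empty p),
     fun p hp => absurd hp (Finset.notMem_empty p)⟩
  have hTne : { r : ℝ | ∃ M : Finset (ℕ × ℕ), IsTreeMapping F G M ∧ mapCost c F G M = r }.Nonempty :=
    ⟨mapCost c F G ∅, ∅, hempty, rfl⟩
  obtain ⟨δ0, hδ01, _⟩ := mapping_to_script c hnn hse htr (fsize F + fsize G) F G ∅ le_rfl hempty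
  have hSne : { r : ℝ | ∃ δ : List (Edit α), applyScript δ F = G ∧ scriptCost c δ F = r }.Nonempty :=
    ⟨scriptCost c δ0 F, δ0, hδ01, rfl⟩
  have hSbdd : BddBelow { r : ℝ | ∃ δ : List (Edit α), applyScript δ F = G ∧ scriptCost c δ F = r } := by
    refine ⟨0, ?_⟩
    rintro s ⟨δ, _, rfl⟩
    exact scriptCost_nonneg hnn δ F
  have hTbdd : BddBelow { r : ℝ | ∃ M : Finset (ℕ × ℕ), IsTreeMapping F G M ∧ mapCost c F G M = r } := by
    refine ⟨0, ?_⟩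
    rintro t ⟨M, _, rfl⟩
    exact mapCost_nonneg hnn F G M
  apply le_antisymm
  · apply le_csInf hTne
    rintro t ⟨M, hM, rfl⟩
    obtain ⟨δ, hδ1, hδ2⟩ := mapping_to_script c hnn hse htr (fsize F + fsize G) F G M le_rfl hM
    exact le_trans (csInf_le hSbdd ⟨δ, hδ1, rfl⟩) hδ2
  · apply le_csInf hSne
    rintro s ⟨δ, hδ1, rfl⟩
    obtain ⟨M, hM, hc⟩ := script_to_mapping c hnn hse htr δ F
    rw [hδ1] at hM hc
    exact le_trans (csInf_le hTbdd ⟨M, hM, rfl⟩) hc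

end TED
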